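/- arXiv:2207.06125 — 4 statements merged into one kernel-verified Lean document; each statement's English description precedes it below -/
import Mathlib

section
/- Assume (H_c), assume a₊(u) < +∞ for all u ∈ [0,1], and assume a₊ : [0,1] → ℝ is convex. Then for every σ ≥ σ_s the set {u ∈ [0,1] : a₊(u) ≤ 𝒱_σ(u)} is either empty or a closed interval [μ,ν] with 0 < μ ≤ ν < 1; consequently, for any u₀ ∈ (0,1), the set of critical levels S_σ := {ξ ∈ ℝ : there exists u ∈ (0,1) with 𝒢_σ(u) = ξ and 𝒢_σ'(u) = 0} of 𝒢_σ(u) := ∫_{u₀}^u ℋ(δ,𝒱_σ(δ)) dδ is either empty or a singleton. -/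
open Set Filter Topology
open scoped ENNReal

noncomputable section

/-- The strip `Ω` between `-ω` and `ω` over `[0,1]`:
`Ω = {(u,s) : u ∈ [0,1], -ω(u) < s < ω(u)}`. -/
def OmegaSet (ω : ℝ → ℝ≥0∞) : Set (ℝ × ℝ) :=
  {p | p.1 ∈ Set.Icc (0:ℝ) 1 ∧ ENNReal.ofReal |p.2| < ω p.1}

/-- The set `𝒟` between `a₋ = -a₊` and `a₊` over `[0,1]`. -/
def DSet (aplus : ℝ → ℝ≥0∞) : Set (ℝ × ℝ) :=
  {p | p.1 ∈ Set.Icc (0:ℝ) 1 ∧ ENNReal.ofReal |p.2| < aplus p.1}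

/-- Standing data and hypotheses: a lower semicontinuous width `ω : [0,1] → (0,∞]`,
a regular flux `a` on `Ω` (odd in `s`, C¹, with `∂a/∂s > 0`), the maximal fluxes
`a₊(u) = lim_{s→ω(u)⁻} a(u,s)` (equivalently, the supremum over `0 < s < ω(u)`),
which are `+∞` whenever `ω(u) < ∞`, the partial inverse `g` on `𝒟` defined by
`a(u, g(u,v)) = v`, and a logistic-type reaction term `f`. -/
structure FluxData where
  ω : ℝ → ℝ≥0∞
  a : ℝ → ℝ → ℝ
  aplus : ℝ → ℝ≥0∞
  g : ℝ → ℝ → ℝ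
  f : ℝ → ℝ
  ω_pos : ∀ u ∈ Set.Icc (0:ℝ) 1, 0 < ω u
  ω_lsc : LowerSemicontinuousOn ω (Set.Icc (0:ℝ) 1)
  a_odd : ∀ u s, (u, s) ∈ OmegaSet ω → a u (-s) = - a u s
  a_C1 : ContDiffOn ℝ 1 (fun p : ℝ × ℝ => a p.1 p.2) (OmegaSet ω)
  a_deriv_pos : ∀ u s, (u, s) ∈ OmegaSet ω → ∃ d : ℝ, 0 < d ∧ HasDerivAt (a u) d s
  aplus_def : ∀ u ∈ Set.Icc (0:ℝ) 1,
      aplus u = ⨆ s ∈ {s : ℝ | 0 < s ∧ (u, s) ∈ OmegaSet ω}, ENNReal.ofReal (a u s)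
  aplus_pos : ∀ u ∈ Set.Icc (0:ℝ) 1, 0 < aplus u
  aplus_top : ∀ u ∈ Set.Icc (0:ℝ) 1, ω u < ⊤ → aplus u = ⊤
  g_spec : ∀ p ∈ DSet aplus, (p.1, g p.1 p.2) ∈ OmegaSet ω ∧ a p.1 (g p.1 p.2) = p.2
  f_C1 : ContDiffOn ℝ 1 f (Set.Icc (0:ℝ) 1)
  f_zero : f 0 = 0
  f_one : f 1 = 0
  f_pos : ∀ u ∈ Set.Ioo (0:ℝ) 1, 0 < f u

/-- A classic traveling wave of `u_t = (b(u,u_x))_x + f(u)` moving at speed `σ`: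
a C² increasing profile `u` with values in `(0,1)`, `0 < u' < ω(u)`, connecting
`0` at `-∞` to `1` at `+∞`, such that `ξ ↦ b(u(ξ),u'(ξ))` is differentiable and
`(b(u,u'))' - σ u' + f(u) = 0`. -/
def IsClassicTW (F : FluxData) (b : ℝ → ℝ → ℝ) (σ : ℝ) (u : ℝ → ℝ) : Prop :=
  ContDiff ℝ 2 u ∧
  (∀ ξ : ℝ, u ξ ∈ Set.Ioo (0:ℝ) 1) ∧
  (∀ ξ : ℝ, 0 < deriv u ξ ∧ ENNReal.ofReal (deriv u ξ) < F.ω (u ξ)) ∧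
  Filter.Tendsto u Filter.atBot (nhds 0) ∧
  Filter.Tendsto u Filter.atTop (nhds 1) ∧
  (∀ ξ : ℝ, HasDerivAt (fun t => b (u t) (deriv u t)) (σ * deriv u ξ - F.f (u ξ)) ξ)

/-- A right solution with speed `σ`: `V : (α,1] → ℝ`, continuous on `(α,1]`,
C¹ on `(α,1)`, `V(1) = 0`, and on `(α,1)` : `V > 0`, `(u,V(u)) ∈ 𝒟` and
`V' = σ - f(u)/g(u,V(u))`. -/
def IsRightSolution (F : FluxData) (σ α : ℝ) (V : ℝ → ℝ) : Prop :=
  α ∈ Set.Ico (0:ℝ) 1 ∧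
  ContinuousOn V (Set.Ioc α 1) ∧
  V 1 = 0 ∧
  ∀ u ∈ Set.Ioo α 1, 0 < V u ∧ (u, V u) ∈ DSet F.aplus ∧
    HasDerivAt V (σ - F.f u / F.g u (V u)) u

open Classical in
/-- `ℋ(u,V) = 1/g(u,V)` if `0 < V < a₊(u)`, and `0` if `V ≥ a₊(u)`. -/
def Hfun (F : FluxData) (u V : ℝ) : ℝ :=
  if ENNReal.ofReal V < F.aplus u then 1 / F.g u V else 0

/-- The solution `𝒱_σ` of the extended problem: continuous on `[0,1]`, C¹ on `(0,1)`,
`𝒱(1) = 0`, `𝒱 > 0` on `(0,1)` and `𝒱' = σ - f(u)·ℋ(u,𝒱(u))` on `(0,1)`. -/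
def IsVsol (F : FluxData) (σ : ℝ) (V : ℝ → ℝ) : Prop :=
  ContinuousOn V (Set.Icc (0:ℝ) 1) ∧ V 1 = 0 ∧
  (∀ u ∈ Set.Ioo (0:ℝ) 1, 0 < V u) ∧
  (∀ u ∈ Set.Ioo (0:ℝ) 1, HasDerivAt V (σ - F.f u * Hfun F u (V u)) u)

namespace StmtAux

variable {F : FluxData}

lemma omega_top (hfin : ∀ u ∈ Set.Icc (0:ℝ) 1, F.aplus u ≠ ⊤) :
    ∀ u ∈ Set.Icc (0:ℝ) 1, F.ω u = ⊤ := fun u hu => by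
  by_contra h
  exact hfin u hu (F.aplus_top u hu (lt_top_iff_ne_top.2 h))

lemma mem_Omega (hfin : ∀ u ∈ Set.Icc (0:ℝ) 1, F.aplus u ≠ ⊤)
    {u : ℝ} (hu : u ∈ Set.Icc (0:ℝ) 1) (s : ℝ) : (u, s) ∈ OmegaSet F.ω :=
  ⟨hu, by rw [omega_top hfin u hu]; exact ENNReal.ofReal_lt_top⟩

lemma strictMono_a (hfin : ∀ u ∈ Set.Icc (0:ℝ) 1, F.aplus u ≠ ⊤)
    {u : ℝ} (hu : u ∈ Set.Icc (0:ℝ) 1) : StrictMono (F.a u) := by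
  apply strictMono_of_deriv_pos
  intro s
  obtain ⟨d, hd, hda⟩ := F.a_deriv_pos u s (mem_Omega hfin hu s)
  rw [hda.deriv]; exact hd

lemma a_zero (hfin : ∀ u ∈ Set.Icc (0:ℝ) 1, F.aplus u ≠ ⊤)
    {u : ℝ} (hu : u ∈ Set.Icc (0:ℝ) 1) : F.a u 0 = 0 := by
  have h := F.a_odd u 0 (mem_Omega hfin hu 0)
  rw [neg_zero] at h
  linarith

section aR
variable {aR : ℝ → ℝ} (haR : ∀ u ∈ Set.Icc (0:ℝ) 1, F.aplus u = ENNReal.ofReal (aR u))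

include haR

lemma aR_pos {u : ℝ} (hu : u ∈ Set.Icc (0:ℝ) 1) : 0 < aR u :=
  ENNReal.ofReal_pos.1 (by rw [← haR u hu]; exact F.aplus_pos u hu)

lemma a_lt_aR (hfin : ∀ u ∈ Set.Icc (0:ℝ) 1, F.aplus u ≠ ⊤)
    {u : ℝ} (hu : u ∈ Set.Icc (0:ℝ) 1) (s : ℝ) : F.a u s < aR u := by
  set s' := max s 0 + 1 with hs'
  have hss' : s < s' := lt_of_le_of_lt (le_max_left s 0) (by simp [hs'])
  have hs'pos : 0 < s' := by positivity
  have h1 : F.a u s < F.a u s' := strictMono_a hfin hu hss'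
  have h2 : ENNReal.ofReal (F.a u s') ≤ F.aplus u := by
    rw [F.aplus_def u hu]
    have hmem : s' ∈ {s : ℝ | 0 < s ∧ (u, s) ∈ OmegaSet F.ω} := ⟨hs'pos, mem_Omega hfin hu s'⟩
    exact le_biSup (fun s => ENNReal.ofReal (F.a u s)) hmem
  rw [haR u hu] at h2
  have h3 := (ENNReal.ofReal_le_ofReal_iff (aR_pos haR hu).le).1 h2
  linarith

lemma mem_DSet {u v : ℝ} (hu : u ∈ Set.Icc (0:ℝ) 1) (h0 : 0 < v) (hlt : v < aR u) :
    (u, v) ∈ DSet F.aplus := by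
  refine ⟨hu, ?_⟩
  rw [haR u hu, abs_of_pos h0]
  exact (ENNReal.ofReal_lt_ofReal_iff (aR_pos haR hu)).2 hlt

lemma g_eq {u v : ℝ} (hu : u ∈ Set.Icc (0:ℝ) 1) (h0 : 0 < v) (hlt : v < aR u) :
    F.a u (F.g u v) = v :=
  (F.g_spec (u, v) (mem_DSet haR hu h0 hlt)).2

lemma g_pos (hfin : ∀ u ∈ Set.Icc (0:ℝ) 1, F.aplus u ≠ ⊤)
    {u v : ℝ} (hu : u ∈ Set.Icc (0:ℝ) 1) (h0 : 0 < v) (hlt : v < aR u) :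
    0 < F.g u v := by
  apply (strictMono_a hfin hu).lt_iff_lt.1
  rw [a_zero hfin hu, g_eq haR hu h0 hlt]
  exact h0

lemma lt_aplus_iff {u v : ℝ} (hu : u ∈ Set.Icc (0:ℝ) 1) (h0 : 0 ≤ v) :
    ENNReal.ofReal v < F.aplus u ↔ v < aR u := by
  rw [haR u hu]; exact ENNReal.ofReal_lt_ofReal_iff_of_nonneg h0

lemma Hfun_eq {u v : ℝ} (hu : u ∈ Set.Icc (0:ℝ) 1) (h0 : 0 < v) (hlt : v < aR u) :
    Hfun F u v = 1 / F.g u v := by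
  simp only [Hfun]
  rw [if_pos ((lt_aplus_iff haR hu h0.le).2 hlt)]

lemma Hfun_pos (hfin : ∀ u ∈ Set.Icc (0:ℝ) 1, F.aplus u ≠ ⊤)
    {u v : ℝ} (hu : u ∈ Set.Icc (0:ℝ) 1) (h0 : 0 < v) (hlt : v < aR u) :
    0 < Hfun F u v := by
  rw [Hfun_eq haR hu h0 hlt]
  exact one_div_pos.2 (g_pos haR hfin hu h0 hlt)

lemma Hfun_zero {u v : ℝ} (hu : u ∈ Set.Icc (0:ℝ) 1) (hge : aR u ≤ v) :
    Hfun F u v = 0 := by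
  simp only [Hfun]
  rw [if_neg]
  rw [haR u hu]
  exact not_lt.2 (ENNReal.ofReal_le_ofReal hge)

lemma Hfun_nonneg (hfin : ∀ u ∈ Set.Icc (0:ℝ) 1, F.aplus u ≠ ⊤)
    {u v : ℝ} (hu : u ∈ Set.Icc (0:ℝ) 1) (h0 : 0 < v) : 0 ≤ Hfun F u v := by
  rcases lt_or_ge v (aR u) with h | h
  · exact (Hfun_pos haR hfin hu h0 h).le
  · rw [Hfun_zero haR hu h]

lemma Hfun_anti (hfin : ∀ u ∈ Set.Icc (0:ℝ) 1, F.aplus u ≠ ⊤)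
    {u v₁ v₂ : ℝ} (hu : u ∈ Set.Icc (0:ℝ) 1) (h1 : 0 < v₁) (h12 : v₁ ≤ v₂) :
    Hfun F u v₂ ≤ Hfun F u v₁ := by
  rcases lt_or_ge v₂ (aR u) with h2 | h2
  · have h1' : v₁ < aR u := lt_of_le_of_lt h12 h2
    rw [Hfun_eq haR hu h1 h1', Hfun_eq haR hu (h1.trans_le h12) h2]
    apply one_div_le_one_div_of_le (g_pos haR hfin hu h1 h1')
    exact (strictMono_a hfin hu).le_iff_le.1 (by rw [g_eq haR hu h1 h1', g_eq haR hu (h1.trans_le h12) h2]; exact h12)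
  · rw [Hfun_zero haR hu h2]
    exact Hfun_nonneg haR hfin hu h1

end aR

end StmtAux
namespace StmtAux

variable {F : FluxData}

lemma scheme {Z : ℝ → ℝ} (hc : ContinuousOn Z (Set.Icc 0 1)) (h1 : Z 1 = 0)
    (hd : ∀ u ∈ Set.Ioo (0:ℝ) 1, 0 < Z u → ∃ z, 0 ≤ z ∧ HasDerivAt Z z u) :
    ∀ u ∈ Set.Icc (0:ℝ) 1, Z u ≤ 0 := by
  intro u₀ hu₀
  by_contra hpos
  push_neg at hpos
  have hu₀1 : u₀ ≠ 1 := fun h => by rw [h, h1] at hpos; exact lt_irrefl 0 hpos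
  have hu₀lt : u₀ < 1 := lt_of_le_of_ne hu₀.2 hu₀1
  set T : Set ℝ := {u ∈ Set.Icc u₀ 1 | Z u = 0} with hT
  have hsub : Set.Icc u₀ 1 ⊆ Set.Icc 0 1 := Set.Icc_subset_Icc hu₀.1 le_rfl
  have hTclosed : IsClosed T :=
    (hc.mono hsub).preimage_isClosed_of_isClosed isClosed_Icc isClosed_singleton
  have hTne : T.Nonempty := ⟨1, Set.right_mem_Icc.2 hu₀lt.le, h1⟩
  have hTbdd : BddBelow T := ⟨u₀, fun x hx => hx.1.1⟩
  set q := sInf T with hq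
  have hqT : q ∈ T := hTclosed.csInf_mem hTne hTbdd
  have hq0 : Z q = 0 := hqT.2
  have hu₀q : u₀ < q := lt_of_le_of_ne hqT.1.1 (fun h => by rw [show Z u₀ = 0 from by rw [h]; exact hq0] at hpos; exact lt_irrefl 0 hpos)
  have hq1 : q ≤ 1 := hqT.1.2
  -- Z > 0 on Ico u₀ q
  have hZpos : ∀ y ∈ Set.Ico u₀ q, 0 < Z y := by
    intro y hy
    by_contra hy'
    push_neg at hy'
    rcases eq_or_lt_of_le hy' with heq | hlt
    · exact absurd (csInf_le hTbdd ⟨⟨hy.1, (hy.2.trans_le hq1).le⟩, heq⟩) (not_le.2 hy.2)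
    · obtain ⟨c, hc1, hc2⟩ := intermediate_value_Icc' hy.1 (hc.mono (Set.Icc_subset_Icc hu₀.1 ((hy.2.trans_le hq1).le))) (Set.mem_Icc.2 ⟨hlt.le, hpos.le⟩)
      have : c ∈ T := ⟨⟨hc1.1, hc1.2.trans (hy.2.trans_le hq1).le⟩, hc2⟩
      exact absurd (csInf_le hTbdd this) (not_le.2 (lt_of_le_of_lt hc1.2 hy.2))
  have hmono : MonotoneOn Z (Set.Icc u₀ q) := by
    have hder : ∀ x ∈ Set.Ioo u₀ q, ∃ z, 0 ≤ z ∧ HasDerivAt Z z x := by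
      intro x hx
      exact hd x ⟨lt_of_le_of_lt hu₀.1 hx.1, lt_of_lt_of_le hx.2 hq1⟩
        (hZpos x ⟨hx.1.le, hx.2⟩)
    apply monotoneOn_of_deriv_nonneg (convex_Icc u₀ q)
      (hc.mono (Set.Icc_subset_Icc hu₀.1 hq1))
    · rw [interior_Icc]
      intro x hx
      obtain ⟨z, _, hz⟩ := hder x hx
      exact hz.differentiableAt.differentiableWithinAt
    · rw [interior_Icc]
      intro x hx
      obtain ⟨z, hz0, hz⟩ := hder x hx
      rw [hz.deriv]; exact hz0
  have := hmono (Set.left_mem_Icc.2 hu₀q.le) (Set.right_mem_Icc.2 hu₀q.le) hu₀q.le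
  rw [hq0] at this
  exact absurd (lt_of_lt_of_le hpos this) (lt_irrefl 0)

section comp
variable {aR : ℝ → ℝ} (haR : ∀ u ∈ Set.Icc (0:ℝ) 1, F.aplus u = ENNReal.ofReal (aR u))
  (hfin : ∀ u ∈ Set.Icc (0:ℝ) 1, F.aplus u ≠ ⊤)

include haR hfin

lemma compA {σ₁ σ₂ : ℝ} {V₁ V₂ : ℝ → ℝ} (h12 : σ₁ ≤ σ₂)
    (hV₁ : IsVsol F σ₁ V₁) (hV₂ : IsVsol F σ₂ V₂) :
    ∀ u ∈ Set.Icc (0:ℝ) 1, V₂ u ≤ V₁ u := by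
  intro u hu
  have key : ∀ w ∈ Set.Icc (0:ℝ) 1, V₂ w - V₁ w ≤ 0 := by
    apply scheme (hV₂.1.sub hV₁.1) (by simp [hV₁.2.1, hV₂.2.1])
    intro w hw hZ
    have hw' : w ∈ Set.Icc (0:ℝ) 1 := ⟨hw.1.le, hw.2.le⟩
    have hpos1 : 0 < V₁ w := hV₁.2.2.1 w hw
    have hH : Hfun F w (V₂ w) ≤ Hfun F w (V₁ w) :=
      Hfun_anti haR hfin hw' hpos1 (by simp only [Pi.sub_apply] at hZ; linarith)
    have hf := F.f_pos w hw
    refine ⟨(σ₂ - σ₁) + F.f w * (Hfun F w (V₁ w) - Hfun F w (V₂ w)), ?_, ?_⟩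
    · nlinarith
    · have d1 := hV₁.2.2.2 w hw
      have d2 := hV₂.2.2.2 w hw
      convert d2.sub d1 using 1
      · rfl
      · rfl
      · ring
  linarith [key u hu]

lemma compB {σ₁ σ₂ : ℝ} {V₁ V₂ : ℝ → ℝ} (h12 : σ₁ ≤ σ₂)
    (hV₁ : IsVsol F σ₁ V₁) (hV₂ : IsVsol F σ₂ V₂) :
    ∀ u ∈ Set.Icc (0:ℝ) 1, V₁ u ≤ V₂ u + (σ₂ - σ₁) * (1 - u) := by
  intro u hu
  have key : ∀ w ∈ Set.Icc (0:ℝ) 1, V₁ w - V₂ w - (σ₂ - σ₁) * (1 - w) ≤ 0 := by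
    apply scheme ((hV₁.1.sub hV₂.1).sub (Continuous.continuousOn (by continuity)))
      (by simp [hV₁.2.1, hV₂.2.1])
    intro w hw hZ
    have hw' : w ∈ Set.Icc (0:ℝ) 1 := ⟨hw.1.le, hw.2.le⟩
    have hpos2 : 0 < V₂ w := hV₂.2.2.1 w hw
    have hle : V₂ w ≤ V₁ w := by simp only [Pi.sub_apply] at hZ; nlinarith [hw.2]
    have hH : Hfun F w (V₁ w) ≤ Hfun F w (V₂ w) :=
      Hfun_anti haR hfin hw' hpos2 hle
    have hf := F.f_pos w hw
    refine ⟨F.f w * (Hfun F w (V₂ w) - Hfun F w (V₁ w)), ?_, ?_⟩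
    · nlinarith
    · have d1 := hV₁.2.2.2 w hw
      have d2 := hV₂.2.2.2 w hw
      have d3 : HasDerivAt (fun x : ℝ => (σ₂ - σ₁) * (1 - x)) ((σ₂ - σ₁) * (0 - 1)) w :=
        ((hasDerivAt_const w (1:ℝ)).sub (hasDerivAt_id w)).const_mul (σ₂ - σ₁)
      convert (d1.sub d2).sub d3 using 1
      · rfl
      · rfl
      · ring
  linarith [key u hu]

end comp

end StmtAux
namespace StmtAux

variable {F : FluxData}

section main
variable {aR : ℝ → ℝ} (haR : ∀ u ∈ Set.Icc (0:ℝ) 1, F.aplus u = ENNReal.ofReal (aR u))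
  (hfin : ∀ u ∈ Set.Icc (0:ℝ) 1, F.aplus u ≠ ⊤)

include haR hfin

lemma aR_cont (hc : ContinuousOn F.aplus (Set.Icc (0:ℝ) 1)) :
    ContinuousOn aR (Set.Icc (0:ℝ) 1) := by
  intro u hu
  have h1 : ContinuousWithinAt (fun x => (F.aplus x).toReal) (Set.Icc (0:ℝ) 1) u :=
    (ENNReal.tendsto_toReal (hfin u hu)).comp (hc u hu)
  apply h1.congr
  · intro x hx; rw [haR x hx, ENNReal.toReal_ofReal (aR_pos haR hx).le]
  · rw [haR u hu, ENNReal.toReal_ofReal (aR_pos haR hu).le]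

lemma Vsigma_zero (𝒱 : ℝ → ℝ → ℝ) (h𝒱 : ∀ σ : ℝ, 0 ≤ σ → IsVsol F σ (𝒱 σ))
    (σs : ℝ) (hσs : σs = sInf {σ : ℝ | 0 ≤ σ ∧ 𝒱 σ 0 = 0})
    (hne : {σ : ℝ | 0 ≤ σ ∧ 𝒱 σ 0 = 0}.Nonempty)
    {σ : ℝ} (hσ : σs ≤ σ) : 𝒱 σ 0 = 0 := by
  have hσs0 : 0 ≤ σs := hσs ▸ le_csInf hne (fun τ hτ => hτ.1)
  have hσ0 : 0 ≤ σ := hσs0.trans hσ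
  have hV := h𝒱 σ hσ0
  have h0mem : (0:ℝ) ∈ Set.Icc (0:ℝ) 1 := ⟨le_rfl, zero_le_one⟩
  -- lower bound
  have h0c : (0:ℝ) ∈ closure (Set.Ioo (0:ℝ) 1) := by
    rw [closure_Ioo (zero_ne_one)]; exact h0mem
  haveI : (𝓝[Set.Ioo (0:ℝ) 1] (0:ℝ)).NeBot := mem_closure_iff_nhdsWithin_neBot.1 h0c
  have hcw : Tendsto (𝒱 σ) (𝓝[Set.Ioo (0:ℝ) 1] 0) (𝓝 (𝒱 σ 0)) :=
    (hV.1 0 h0mem).mono_left (nhdsWithin_mono _ Set.Ioo_subset_Icc_self)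
  have hlow : 0 ≤ 𝒱 σ 0 := ge_of_tendsto hcw (by
    filter_upwards [self_mem_nhdsWithin] with x hx
    exact (hV.2.2.1 x hx).le)
  -- upper bound
  have hup : ∀ ε : ℝ, 0 < ε → 𝒱 σ 0 ≤ ε := by
    intro ε hε
    obtain ⟨τ, hτmem, hτlt⟩ : ∃ τ ∈ {σ : ℝ | 0 ≤ σ ∧ 𝒱 σ 0 = 0}, τ < σs + ε :=
      exists_lt_of_csInf_lt hne (by rw [← hσs]; linarith)
    obtain ⟨hτ0, hτzero⟩ := hτmem
    rcases le_or_gt τ σ with hts | hts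
    · have := compA haR hfin hts (h𝒱 τ hτ0) (h𝒱 σ hσ0) 0 h0mem
      rw [hτzero] at this
      linarith
    · have := compB haR hfin hts.le (h𝒱 σ hσ0) (h𝒱 τ hτ0) 0 h0mem
      rw [hτzero] at this
      simp only [sub_zero, mul_one] at this
      linarith
  by_contra hne'
  have hpos : 0 < 𝒱 σ 0 := lt_of_le_of_ne hlow (Ne.symm hne')
  linarith [hup (𝒱 σ 0 / 2) (by linarith)]

lemma contact_ordconn (hconv : ConvexOn ℝ (Set.Icc (0:ℝ) 1) aR)
    (haRc : ContinuousOn aR (Set.Icc (0:ℝ) 1))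
    {σ : ℝ} {V : ℝ → ℝ} (hV : IsVsol F σ V)
    {u₁ u₂ w : ℝ} (h1 : u₁ ∈ Set.Ioo (0:ℝ) 1) (h2 : u₂ ∈ Set.Ioo (0:ℝ) 1)
    (hK1 : aR u₁ ≤ V u₁) (hK2 : aR u₂ ≤ V u₂) (h1w : u₁ ≤ w) (hw2 : w ≤ u₂) :
    aR w ≤ V w := by
  by_contra hcw
  push_neg at hcw   -- V w < aR w
  rcases eq_or_lt_of_le h1w with rfl | h1w
  · exact absurd hK1 (not_le.2 hcw)
  rcases eq_or_lt_of_le hw2 with rfl | hw2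
  · exact absurd hK2 (not_le.2 hcw)
  have hw : w ∈ Set.Ioo (0:ℝ) 1 := ⟨h1.1.trans h1w, hw2.trans h2.2⟩
  have hIcc1 : Set.Icc u₁ w ⊆ Set.Icc (0:ℝ) 1 := Set.Icc_subset_Icc h1.1.le hw.2.le
  have hIcc2 : Set.Icc w u₂ ⊆ Set.Icc (0:ℝ) 1 := Set.Icc_subset_Icc hw.1.le h2.2.le
  have hhc : ContinuousOn (fun u => V u - aR u) (Set.Icc (0:ℝ) 1) := hV.1.sub haRc
  -- the point p
  set P : Set ℝ := {u ∈ Set.Icc u₁ w | 0 ≤ V u - aR u} with hP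
  have hPclosed : IsClosed P := by
    have : P = Set.Icc u₁ w ∩ (fun u => V u - aR u) ⁻¹' (Set.Ici 0) := rfl
    rw [this]
    exact (hhc.mono hIcc1).preimage_isClosed_of_isClosed isClosed_Icc isClosed_Ici
  have hPne : P.Nonempty := ⟨u₁, Set.left_mem_Icc.2 h1w.le, by simp; linarith⟩
  have hPbdd : BddAbove P := ⟨w, fun x hx => hx.1.2⟩
  set p := sSup P with hpdef
  have hpP : p ∈ P := hPclosed.csSup_mem hPne hPbdd
  have hpIcc : p ∈ Set.Icc u₁ w := hpP.1
  have hppos : 0 ≤ V p - aR p := hpP.2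
  have hpw : p < w := lt_of_le_of_ne hpIcc.2 (fun hal => by rw [hal] at hppos; linarith)
  have hp01 : p ∈ Set.Ioo (0:ℝ) 1 := ⟨h1.1.trans_le hpIcc.1, hpw.trans hw.2⟩
  have hIocp : ∀ u ∈ Set.Ioc p w, V u < aR u := by
    intro u hu
    by_contra hle
    push_neg at hle
    have : u ∈ P := ⟨⟨hpIcc.1.trans hu.1.le, hu.2⟩, by linarith⟩
    exact absurd (le_csSup hPbdd this) (not_le.2 hu.1)
  have hpneg : V p - aR p ≤ 0 := by
    haveI : (𝓝[Set.Ioc p w] p).NeBot := by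
      apply mem_closure_iff_nhdsWithin_neBot.1
      rw [closure_Ioc hpw.ne]
      exact Set.left_mem_Icc.2 hpw.le
    have hcw2 : Tendsto (fun u => V u - aR u) (𝓝[Set.Ioc p w] p) (𝓝 (V p - aR p)) :=
      (hhc p (Set.mem_of_mem_of_subset hpIcc hIcc1)).mono_left
        (nhdsWithin_mono _ (fun x hx => hIcc1 ⟨hpIcc.1.trans hx.1.le, hx.2⟩))
    refine le_of_tendsto hcw2 ?_
    filter_upwards [self_mem_nhdsWithin] with u hu
    linarith [hIocp u hu]
  have hp0 : V p = aR p := by linarith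
  -- the point q
  set Q : Set ℝ := {u ∈ Set.Icc w u₂ | 0 ≤ V u - aR u} with hQ
  have hQclosed : IsClosed Q := by
    have : Q = Set.Icc w u₂ ∩ (fun u => V u - aR u) ⁻¹' (Set.Ici 0) := rfl
    rw [this]
    exact (hhc.mono hIcc2).preimage_isClosed_of_isClosed isClosed_Icc isClosed_Ici
  have hQne : Q.Nonempty := ⟨u₂, Set.right_mem_Icc.2 hw2.le, by simp; linarith⟩
  have hQbdd : BddBelow Q := ⟨w, fun x hx => hx.1.1⟩
  set q := sInf Q with hqdef
  have hqQ : q ∈ Q := hQclosed.csInf_mem hQne hQbdd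
  have hqIcc : q ∈ Set.Icc w u₂ := hqQ.1
  have hqpos : 0 ≤ V q - aR q := hqQ.2
  have hwq : w < q := lt_of_le_of_ne hqIcc.1 (fun hal => by rw [← hal] at hqpos; linarith)
  have hq01 : q ∈ Set.Ioo (0:ℝ) 1 := ⟨hw.1.trans hwq, lt_of_le_of_lt hqIcc.2 h2.2⟩
  have hIcoq : ∀ u ∈ Set.Ico w q, V u < aR u := by
    intro u hu
    by_contra hle
    push_neg at hle
    have : u ∈ Q := ⟨⟨hu.1, hu.2.le.trans hqIcc.2⟩, by linarith⟩
    exact absurd (csInf_le hQbdd this) (not_le.2 hu.2)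
  have hpq : p < q := hpw.trans hwq
  have hneg : ∀ u ∈ Set.Ioo p q, V u < aR u := by
    intro u hu
    rcases le_or_gt u w with hle | hlt
    · exact hIocp u ⟨hu.1, hle⟩
    · exact hIcoq u ⟨hlt.le, hu.2⟩
  have hsubpq : Set.Icc p q ⊆ Set.Icc (0:ℝ) 1 := Set.Icc_subset_Icc hp01.1.le hq01.2.le
  -- contact derivative at p
  have hHp : Hfun F p (V p) = 0 := Hfun_zero haR (hsubpq (Set.left_mem_Icc.2 hpq.le)) hp0.ge
  have hdVp : HasDerivAt V σ p := by
    have hd := hV.2.2.2 p hp01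
    rwa [hHp, mul_zero, sub_zero] at hd
  -- strict monotonicity of σ u - V u on [p,q]
  have hφ : StrictMonoOn (fun u => σ * u - V u) (Set.Icc p q) := by
    apply strictMonoOn_of_deriv_pos (convex_Icc p q)
    · exact ((continuous_const.mul continuous_id).continuousOn).sub (hV.1.mono hsubpq)
    · rw [interior_Icc]
      intro x hx
      have hx01 : x ∈ Set.Ioo (0:ℝ) 1 := ⟨hp01.1.trans hx.1, hx.2.trans hq01.2⟩
      have hd := hV.2.2.2 x hx01
      have hdx : HasDerivAt (fun u => σ * u - V u) (σ * 1 - (σ - F.f x * Hfun F x (V x))) x :=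
        ((hasDerivAt_id x).const_mul σ).sub hd
      rw [hdx.deriv]
      have hVx : 0 < V x := hV.2.2.1 x hx01
      have hHx : 0 < Hfun F x (V x) :=
        Hfun_pos haR hfin ⟨hx01.1.le, hx01.2.le⟩ hVx (hneg x hx)
      have hf := F.f_pos x hx01
      nlinarith
  have hVq : V q - V p < σ * (q - p) := by
    have h5 := hφ (Set.left_mem_Icc.2 hpq.le) (Set.right_mem_Icc.2 hpq.le) hpq
    simp only at h5
    nlinarith
  set m : ℝ := (aR q - aR p) / (q - p) with hm
  have hqp : (0:ℝ) < q - p := by linarith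
  have hmσ : m < σ := by
    rw [hm, div_lt_iff₀ hqp]
    nlinarith
  have hslope_le : ∀ u ∈ Set.Ioo p q, slope V p u ≤ m := by
    intro u hu
    have hup : (0:ℝ) < u - p := by linarith [hu.1]
    have hsec : (aR u - aR p) / (u - p) ≤ m :=
      hconv.secant_mono (hsubpq (Set.left_mem_Icc.2 hpq.le))
        (hsubpq ⟨hu.1.le, hu.2.le⟩) (hsubpq (Set.right_mem_Icc.2 hpq.le))
        hu.1.ne' hpq.ne' hu.2.le
    have haru : aR u - aR p ≤ m * (u - p) := (div_le_iff₀ hup).1 hsec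
    have hVu := hneg u hu
    rw [slope_def_field, div_le_iff₀ hup]
    linarith
  haveI : (𝓝[>] p).NeBot := inferInstance
  have hslope : Tendsto (slope V p) (𝓝[>] p) (𝓝 σ) :=
    (hasDerivAt_iff_tendsto_slope.1 hdVp).mono_left
      (nhdsWithin_mono _ (fun x hx => Set.mem_compl_singleton_iff.2 (LT.lt.ne' hx)))
  have hσm : σ ≤ m := le_of_tendsto hslope (by
    filter_upwards [Ioo_mem_nhdsGT_of_mem (Set.left_mem_Ico.2 hpq)] with u hu
    exact hslope_le u hu)
  linarith

end main

end StmtAux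
namespace StmtAux

variable {F : FluxData}

lemma a_slice_contAt (hfin : ∀ u ∈ Set.Icc (0:ℝ) 1, F.aplus u ≠ ⊤)
    {t₀ : ℝ} (ht : t₀ ∈ Set.Ioo (0:ℝ) 1) (s : ℝ) :
    ContinuousAt (fun t => F.a t s) t₀ := by
  have hopen : IsOpen (Set.Ioo (0:ℝ) 1 ×ˢ (Set.univ : Set ℝ)) := isOpen_Ioo.prod isOpen_univ
  have hsub : Set.Ioo (0:ℝ) 1 ×ˢ (Set.univ : Set ℝ) ⊆ OmegaSet F.ω := fun x hx =>
    mem_Omega hfin ⟨hx.1.1.le, hx.1.2.le⟩ x.2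
  have hmem : (t₀, s) ∈ Set.Ioo (0:ℝ) 1 ×ˢ (Set.univ : Set ℝ) := ⟨ht, trivial⟩
  have hca : ContinuousAt (fun x : ℝ × ℝ => F.a x.1 x.2) (t₀, s) :=
    (F.a_C1.continuousOn).continuousAt (mem_nhds_iff.2 ⟨_, hsub, hopen, hmem⟩)
  have hpair : ContinuousAt (fun t : ℝ => ((t, s) : ℝ × ℝ)) t₀ :=
    continuousAt_id.prodMk continuousAt_const
  exact ContinuousAt.comp (f := fun t : ℝ => ((t, s) : ℝ × ℝ)) (x := t₀) hca hpair

section main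
variable {aR : ℝ → ℝ} (haR : ∀ u ∈ Set.Icc (0:ℝ) 1, F.aplus u = ENNReal.ofReal (aR u))
  (hfin : ∀ u ∈ Set.Icc (0:ℝ) 1, F.aplus u ≠ ⊤)

include haR hfin

lemma Hcurve_contOn (haRc : ContinuousOn aR (Set.Icc (0:ℝ) 1))
    {σ : ℝ} {V : ℝ → ℝ} (hV : IsVsol F σ V) :
    ContinuousOn (fun t => Hfun F t (V t)) (Set.Ioo (0:ℝ) 1) := by
  intro t₀ ht₀
  have hVat : ContinuousAt V t₀ := hV.1.continuousAt (Icc_mem_nhds ht₀.1 ht₀.2)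
  have haRat : ContinuousAt aR t₀ := haRc.continuousAt (Icc_mem_nhds ht₀.1 ht₀.2)
  have hVpos : 0 < V t₀ := hV.2.2.1 t₀ ht₀
  have ht₀Icc : t₀ ∈ Set.Icc (0:ℝ) 1 := ⟨ht₀.1.le, ht₀.2.le⟩
  have hevIoo : ∀ᶠ t in 𝓝 t₀, t ∈ Set.Ioo (0:ℝ) 1 :=
    eventually_of_mem (isOpen_Ioo.mem_nhds ht₀) (fun x hx => hx)
  suffices h : ContinuousAt (fun t => Hfun F t (V t)) t₀ from h.continuousWithinAt
  rcases lt_or_ge (V t₀) (aR t₀) with hlt | hge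
  · -- noncontact case
    set s₀ := F.g t₀ (V t₀) with hs₀
    have hs₀pos : 0 < s₀ := g_pos haR hfin ht₀Icc hVpos hlt
    have hevD : ∀ᶠ t in 𝓝 t₀, V t < aR t := by
      have hca : ContinuousAt (fun t => aR t - V t) t₀ := haRat.sub hVat
      have := hca.eventually_const_lt (u := (0:ℝ)) (by simpa using sub_pos.2 hlt)
      filter_upwards [this] with t ht; linarith
    have hgt : Tendsto (fun t => F.g t (V t)) (𝓝 t₀) (𝓝 s₀) := by
      rw [Metric.tendsto_nhds]
      intro ε hε
      have hgeq : F.a t₀ s₀ = V t₀ := g_eq haR ht₀Icc hVpos hlt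
      have hevlow : ∀ᶠ t in 𝓝 t₀, F.a t (s₀ - ε) < V t := by
        have hca : ContinuousAt (fun t => V t - F.a t (s₀ - ε)) t₀ :=
          hVat.sub (a_slice_contAt hfin ht₀ (s₀ - ε))
        have hposd : (0:ℝ) < V t₀ - F.a t₀ (s₀ - ε) := by
          have := (strictMono_a hfin ht₀Icc) (show s₀ - ε < s₀ by linarith)
          rw [hgeq] at this; linarith
        have := hca.eventually_const_lt (u := (0:ℝ)) hposd
        filter_upwards [this] with t ht; linarith
      have hevhigh : ∀ᶠ t in 𝓝 t₀, V t < F.a t (s₀ + ε) := by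
        have hca : ContinuousAt (fun t => F.a t (s₀ + ε) - V t) t₀ :=
          (a_slice_contAt hfin ht₀ (s₀ + ε)).sub hVat
        have hposd : (0:ℝ) < F.a t₀ (s₀ + ε) - V t₀ := by
          have := (strictMono_a hfin ht₀Icc) (show s₀ < s₀ + ε by linarith)
          rw [hgeq] at this; linarith
        have := hca.eventually_const_lt (u := (0:ℝ)) hposd
        filter_upwards [this] with t ht; linarith
      filter_upwards [hevIoo, hevD, hevlow, hevhigh] with t ht1 ht2 ht3 ht4
      have htIcc : t ∈ Set.Icc (0:ℝ) 1 := ⟨ht1.1.le, ht1.2.le⟩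
      have htV : 0 < V t := hV.2.2.1 t ht1
      have hgeq' : F.a t (F.g t (V t)) = V t := g_eq haR htIcc htV ht2
      have hlow : s₀ - ε < F.g t (V t) := by
        apply (strictMono_a hfin htIcc).lt_iff_lt.1
        rw [hgeq']; exact ht3
      have hhigh : F.g t (V t) < s₀ + ε := by
        apply (strictMono_a hfin htIcc).lt_iff_lt.1
        rw [hgeq']; exact ht4
      rw [Real.dist_eq, abs_sub_lt_iff]
      constructor <;> linarith
    have htend : Tendsto (fun t => 1 / F.g t (V t)) (𝓝 t₀) (𝓝 (1 / s₀)) :=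
      tendsto_const_nhds.div hgt hs₀pos.ne'
    rw [ContinuousAt, Hfun_eq haR ht₀Icc hVpos hlt]
    apply htend.congr'
    filter_upwards [hevIoo, hevD] with t ht1 ht2
    exact (Hfun_eq haR ⟨ht1.1.le, ht1.2.le⟩ (hV.2.2.1 t ht1) ht2).symm
  · -- contact case
    rw [ContinuousAt, Hfun_zero haR ht₀Icc hge, Metric.tendsto_nhds]
    intro ε hε
    set M : ℝ := 1 / ε + 1 with hM
    have hMpos : 0 < M := by positivity
    have hMε : 1 / M < ε := by
      rw [div_lt_iff₀ hMpos]
      have h1 : ε * (1 / ε) = 1 := by field_simp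
      have h2 : ε * M = 1 + ε := by rw [hM, mul_add, h1, mul_one]
      linarith
    have hev1 : ∀ᶠ t in 𝓝 t₀, F.a t M < V t := by
      have hca : ContinuousAt (fun t => V t - F.a t M) t₀ :=
        hVat.sub (a_slice_contAt hfin ht₀ M)
      have hposd : (0:ℝ) < V t₀ - F.a t₀ M := by
        have := a_lt_aR haR hfin ht₀Icc M
        linarith
      have := hca.eventually_const_lt (u := (0:ℝ)) hposd
      filter_upwards [this] with t ht; linarith
    filter_upwards [hevIoo, hev1] with t ht1 ht2
    have htIcc : t ∈ Set.Icc (0:ℝ) 1 := ⟨ht1.1.le, ht1.2.le⟩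
    have htV : 0 < V t := hV.2.2.1 t ht1
    rcases lt_or_ge (V t) (aR t) with hlt' | hge'
    · have hgeq' : F.a t (F.g t (V t)) = V t := g_eq haR htIcc htV hlt'
      have hgM : M < F.g t (V t) := by
        apply (strictMono_a hfin htIcc).lt_iff_lt.1
        rw [hgeq']; exact ht2
      have hgpos : 0 < F.g t (V t) := hMpos.trans hgM
      rw [Hfun_eq haR htIcc htV hlt', Real.dist_eq, sub_zero,
        abs_of_pos (by positivity)]
      calc 1 / F.g t (V t) < 1 / M := by
            apply one_div_lt_one_div_of_lt hMpos hgM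
        _ < ε := hMε
    · rw [Hfun_zero haR htIcc hge']
      simpa using hε

end main

end StmtAux
open StmtAux in
theorem stmt14 (F : FluxData) (hc : ContinuousOn F.aplus (Set.Icc (0:ℝ) 1))
    (hfin : ∀ u ∈ Set.Icc (0:ℝ) 1, F.aplus u ≠ ⊤)
    (aR : ℝ → ℝ) (haR : ∀ u ∈ Set.Icc (0:ℝ) 1, F.aplus u = ENNReal.ofReal (aR u))
    (hconv : ConvexOn ℝ (Set.Icc (0:ℝ) 1) aR)
    (𝒱 : ℝ → ℝ → ℝ) (h𝒱 : ∀ σ : ℝ, 0 ≤ σ → IsVsol F σ (𝒱 σ))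
    (σs : ℝ) (hσs : σs = sInf {σ : ℝ | 0 ≤ σ ∧ 𝒱 σ 0 = 0})
    (hne : {σ : ℝ | 0 ≤ σ ∧ 𝒱 σ 0 = 0}.Nonempty)
    (σ : ℝ) (hσ : σs ≤ σ) :
    ({u : ℝ | u ∈ Set.Icc (0:ℝ) 1 ∧ aR u ≤ 𝒱 σ u} = ∅ ∨
      ∃ μ ν : ℝ, 0 < μ ∧ μ ≤ ν ∧ ν < 1 ∧
        {u : ℝ | u ∈ Set.Icc (0:ℝ) 1 ∧ aR u ≤ 𝒱 σ u} = Set.Icc μ ν) ∧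
    ∀ u₀ ∈ Set.Ioo (0:ℝ) 1, ∀ G : ℝ → ℝ,
      (∀ u : ℝ, G u = ∫ t in u₀..u, Hfun F t (𝒱 σ t)) →
      ({ξ : ℝ | ∃ u ∈ Set.Ioo (0:ℝ) 1, G u = ξ ∧ deriv G u = 0} = ∅ ∨
        ∃ ξ₀ : ℝ, {ξ : ℝ | ∃ u ∈ Set.Ioo (0:ℝ) 1, G u = ξ ∧ deriv G u = 0} = {ξ₀}) := by
  have hσs0 : 0 ≤ σs := hσs ▸ le_csInf hne (fun τ hτ => hτ.1)
  have hσ0 : 0 ≤ σ := hσs0.trans hσ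
  have hV := h𝒱 σ hσ0
  have hV0 : 𝒱 σ 0 = 0 := Vsigma_zero haR hfin 𝒱 h𝒱 σs hσs hne hσ
  have haRc : ContinuousOn aR (Set.Icc (0:ℝ) 1) := aR_cont haR hfin hc
  set K : Set ℝ := {u : ℝ | u ∈ Set.Icc (0:ℝ) 1 ∧ aR u ≤ 𝒱 σ u} with hK
  have hKsub : K ⊆ Set.Ioo (0:ℝ) 1 := by
    rintro u ⟨hu, hle⟩
    refine ⟨lt_of_le_of_ne hu.1 ?_, lt_of_le_of_ne hu.2 ?_⟩
    · intro h0
      rw [← h0, hV0] at hle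
      exact absurd hle (not_le.2 (aR_pos haR ⟨le_rfl, zero_le_one⟩))
    · intro h1
      rw [h1, hV.2.1] at hle
      exact absurd hle (not_le.2 (aR_pos haR ⟨zero_le_one, le_rfl⟩))
  -- K is empty or a closed interval
  have hKcases : K = ∅ ∨ ∃ μ ν : ℝ, 0 < μ ∧ μ ≤ ν ∧ ν < 1 ∧ K = Set.Icc μ ν := by
    rcases Set.eq_empty_or_nonempty K with hKe | hKne
    · exact Or.inl hKe
    right
    have hbddA : BddAbove K := ⟨1, fun x hx => hx.1.2⟩
    have hbddB : BddBelow K := ⟨0, fun x hx => hx.1.1⟩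
    have hKclosed : IsClosed K := by
      have heq : K = Set.Icc (0:ℝ) 1 ∩ (fun u => 𝒱 σ u - aR u) ⁻¹' Set.Ici 0 := by
        ext u; simp [hK, sub_nonneg]
      rw [heq]
      exact (hV.1.sub haRc).preimage_isClosed_of_isClosed isClosed_Icc isClosed_Ici
    set μ := sInf K with hμdef
    set ν := sSup K with hνdef
    have hμK : μ ∈ K := hKclosed.csInf_mem hKne hbddB
    have hνK : ν ∈ K := hKclosed.csSup_mem hKne hbddA
    have hμIoo := hKsub hμK
    have hνIoo := hKsub hνK
    refine ⟨μ, ν, hμIoo.1, csInf_le_csSup hKne hbddB hbddA, hνIoo.2, ?_⟩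
    ext u
    constructor
    · intro hu
      exact ⟨csInf_le hbddB hu, le_csSup hbddA hu⟩
    · intro hu
      refine ⟨⟨hμIoo.1.le.trans hu.1, hu.2.trans hνIoo.2.le⟩, ?_⟩
      exact contact_ordconn haR hfin hconv haRc hV hμIoo hνIoo hμK.2 hνK.2 hu.1 hu.2
  refine ⟨hKcases, ?_⟩
  -- Part 2
  intro u₀ hu₀ G hG
  have hHcont : ContinuousOn (fun t => Hfun F t (𝒱 σ t)) (Set.Ioo (0:ℝ) 1) :=
    Hcurve_contOn haR hfin haRc hV
  have hGder : ∀ u ∈ Set.Ioo (0:ℝ) 1, HasDerivAt G (Hfun F u (𝒱 σ u)) u := by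
    intro u hu
    have hfun_eq : G = fun x => ∫ t in u₀..x, Hfun F t (𝒱 σ t) := funext hG
    rw [hfun_eq]
    apply intervalIntegral.integral_hasDerivAt_right
    · apply ContinuousOn.intervalIntegrable
      exact hHcont.mono (Set.ordConnected_Ioo.uIcc_subset hu₀ hu)
    · exact hHcont.stronglyMeasurableAtFilter isOpen_Ioo u hu
    · exact hHcont.continuousAt (isOpen_Ioo.mem_nhds hu)
  have hcrit : ∀ u ∈ Set.Ioo (0:ℝ) 1, deriv G u = 0 → u ∈ K := by
    intro u hu hder
    have hd := (hGder u hu).deriv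
    rw [hder] at hd
    refine ⟨⟨hu.1.le, hu.2.le⟩, ?_⟩
    by_contra hlt
    push_neg at hlt
    exact absurd hd.symm
      (ne_of_gt (Hfun_pos haR hfin ⟨hu.1.le, hu.2.le⟩ (hV.2.2.1 u hu) hlt))
  rcases hKcases with hKe | ⟨μ, ν, hμ0, hμν, hν1, hKI⟩
  · left
    ext ξ
    simp only [Set.mem_setOf_eq, Set.mem_empty_iff_false, iff_false]
    rintro ⟨u, hu, _, hder⟩
    have : u ∈ K := hcrit u hu hder
    rw [hKe] at this
    exact this
  · right
    have hIsub : Set.Icc μ ν ⊆ Set.Ioo (0:ℝ) 1 := hKI ▸ hKsub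
    have hzero : ∀ x ∈ Set.Icc μ ν, deriv G x = 0 := by
      intro x hx
      have hxK : x ∈ K := hKI ▸ hx
      rw [(hGder x (hIsub hx)).deriv]
      exact Hfun_zero haR hxK.1 hxK.2
    have hGcont : ContinuousOn G (Set.Icc μ ν) := fun x hx =>
      ((hGder x (hIsub hx)).differentiableAt.continuousAt).continuousWithinAt
    have hGdiff : DifferentiableOn ℝ G (interior (Set.Icc μ ν)) := by
      rw [interior_Icc]
      exact fun x hx =>
        (hGder x (hIsub (Set.Ioo_subset_Icc_self hx))).differentiableAt.differentiableWithinAt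
    have hmono : MonotoneOn G (Set.Icc μ ν) :=
      monotoneOn_of_deriv_nonneg (convex_Icc μ ν) hGcont hGdiff
        (fun x hx => le_of_eq (hzero x (interior_subset hx)).symm)
    have hanti : AntitoneOn G (Set.Icc μ ν) :=
      antitoneOn_of_deriv_nonpos (convex_Icc μ ν) hGcont hGdiff
        (fun x hx => le_of_eq (hzero x (interior_subset hx)))
    have hconst : ∀ x ∈ Set.Icc μ ν, G x = G μ := by
      intro x hx
      have hμmem : μ ∈ Set.Icc μ ν := Set.left_mem_Icc.2 hμν
      exact le_antisymm (hanti hμmem hx hx.1) (hmono hμmem hx hx.1)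
    refine ⟨G μ, ?_⟩
    ext ξ
    simp only [Set.mem_setOf_eq, Set.mem_singleton_iff]
    constructor
    · rintro ⟨u, hu, hGu, hder⟩
      have huK : u ∈ Set.Icc μ ν := hKI ▸ hcrit u hu hder
      rw [← hGu]
      exact hconst u huK
    · intro hξ
      refine ⟨μ, hIsub (Set.left_mem_Icc.2 hμν), hξ.symm ▸ rfl, ?_⟩
      exact hzero μ (Set.left_mem_Icc.2 hμν)
end
end

section
/- Let δ > 0, let γ : [0,δ]² → (0,∞) be continuous, set γ₀ := γ(0,0), let σ > 0 and 0 < ε ≤ δ. Suppose V : [0,ε) → [0,δ] is continuous with V(0) = 0, V(u) > 0 for u ∈ (0,ε), V is differentiable on (0,ε), and V'(u) = σ − (u/V(u))·γ(u,V(u)) for all u ∈ (0,ε). Then σ ≥ 2√γ₀, the limit w := lim_{u→0⁺} V(u)/u exists, and w² − σ·w + γ₀ = 0. -/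
open Set Filter Topology
open scoped ENNReal

noncomputable section

/-- A solution to the right of the singular problem `V' = σ - (u/V)·γ(u,V)`, `V(0)=0`,
on `[0,ε)`, with values in `[0,δ]`, positive on `(0,ε)`. -/
def IsSingSol (δ : ℝ) (γ : ℝ → ℝ → ℝ) (σ ε : ℝ) (V : ℝ → ℝ) : Prop :=
  ContinuousOn V (Set.Ico 0 ε) ∧ V 0 = 0 ∧
  (∀ u ∈ Set.Ico (0:ℝ) ε, V u ∈ Set.Icc (0:ℝ) δ) ∧
  (∀ u ∈ Set.Ioo (0:ℝ) ε, 0 < V u) ∧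
  (∀ u ∈ Set.Ioo (0:ℝ) ε, HasDerivAt V (σ - u / V u * γ u (V u)) u)

/-- A solution to the left of `V' = σ - (u/V)·γ(u,V)` with `V(u₀) = V₀`, defined on
`(β,u₀]`, with values in `(0,δ]`. -/
def IsLeftSol (δ : ℝ) (γ : ℝ → ℝ → ℝ) (σ u₀ V₀ β : ℝ) (W : ℝ → ℝ) : Prop :=
  0 ≤ β ∧ β < u₀ ∧ ContinuousOn W (Set.Ioc β u₀) ∧
  (∀ u ∈ Set.Ioc β u₀, W u ∈ Set.Ioc (0:ℝ) δ) ∧ W u₀ = V₀ ∧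
  (∀ u ∈ Set.Ioo β u₀, HasDerivAt W (σ - u / W u * γ u (W u)) u)

lemma crossing {f f' : ℝ → ℝ} {b a c : ℝ} (hba : b < a)
    (hf : ∀ x ∈ Set.Icc b a, HasDerivAt f (f' x) x)
    (hfb : f b < c) (hfa : c < f a) :
    ∃ t ∈ Set.Ico b a, f t = c ∧ 0 ≤ f' t := by
  have hcont : ContinuousOn f (Set.Icc b a) :=
    fun x hx => (hf x hx).continuousAt.continuousWithinAt
  set S := Set.Icc b a ∩ f ⁻¹' Set.Iic c with hS
  have hSclosed : IsClosed S :=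
    hcont.preimage_isClosed_of_isClosed isClosed_Icc isClosed_Iic
  have hSne : S.Nonempty := ⟨b, ⟨le_refl _, hba.le⟩, hfb.le⟩
  have hSbdd : BddAbove S := ⟨a, fun x hx => hx.1.2⟩
  set t := sSup S with ht
  have htS : t ∈ S := hSclosed.csSup_mem hSne hSbdd
  have htmem : t ∈ Set.Icc b a := htS.1
  have hta : t < a := by
    rcases lt_or_eq_of_le htmem.2 with h | h
    · exact h
    · rw [h] at htS; exact absurd htS.2 (not_le.2 hfa)
  have hgt : ∀ s ∈ Set.Ioc t a, c < f s := by
    intro s hs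
    by_contra h
    exact absurd (le_csSup hSbdd ⟨⟨htmem.1.trans hs.1.le, hs.2⟩, not_lt.1 h⟩) (not_le.2 hs.1)
  have hnb : (𝓝[Set.Ioc t a] t).NeBot := by
    rw [nhdsWithin_Ioc_eq_nhdsGT hta]; infer_instance
  have htend : Filter.Tendsto f (𝓝[Set.Ioc t a] t) (𝓝 (f t)) :=
    ((hf t htmem).continuousAt.tendsto).mono_left nhdsWithin_le_nhds
  have htc : f t = c := by
    refine le_antisymm htS.2 (ge_of_tendsto htend ?_)
    filter_upwards [self_mem_nhdsWithin] with s hs using (hgt s hs).le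
  refine ⟨t, ⟨htmem.1, hta⟩, htc, ?_⟩
  have hslope : Filter.Tendsto (slope f t) (𝓝[Set.Ioc t a \ {t}] t) (𝓝 (f' t)) :=
    hasDerivWithinAt_iff_tendsto_slope.1 ((hf t htmem).hasDerivWithinAt)
  have hdiff : Set.Ioc t a \ {t} = Set.Ioc t a := by
    apply Set.diff_singleton_eq_self
    intro h; exact absurd h.1 (lt_irrefl t)
  rw [hdiff] at hslope
  refine ge_of_tendsto hslope ?_
  filter_upwards [self_mem_nhdsWithin] with s hs
  have h1 : 0 < f s - f t := by rw [htc]; linarith [hgt s hs]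
  have h2 : 0 < s - t := by linarith [hs.1]
  rw [slope_def_field]
  exact le_of_lt (div_pos h1 h2)

lemma log_blowup {β η c : ℝ} (hβ : 0 < β) (hη : 0 < η) (f f' : ℝ → ℝ)
    (hf : ∀ u ∈ Set.Ioo (0:ℝ) β, HasDerivAt f (f' u) u)
    (hd : ∀ u ∈ Set.Ioo (0:ℝ) β, η / (2*u) < f' u)
    (hc : ∀ u ∈ Set.Ioo (0:ℝ) β, c ≤ f u) : False := by
  set F : ℝ → ℝ := fun u => f u - (η/2) * Real.log u with hFdef
  have hF : ∀ u ∈ Set.Ioo (0:ℝ) β, HasDerivAt F (f' u - (η/2) * (1/u)) u := by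
    intro u hu
    exact (hf u hu).sub ((Real.hasDerivAt_log (ne_of_gt hu.1)).const_mul (η/2) |>.congr_deriv (by ring))
  have hmono : StrictMonoOn F (Set.Ioo (0:ℝ) β) := by
    apply strictMonoOn_of_deriv_pos (convex_Ioo _ _)
    · exact fun x hx => (hF x hx).continuousAt.continuousWithinAt
    · intro x hx
      rw [interior_Ioo] at hx
      rw [(hF x hx).deriv]
      have h2 : η/(2*x) = η/2*(1/x) := by ring
      have := hd x hx
      rw [h2] at this
      linarith
  set K : ℝ := c - f (β/2) + (η/2) * Real.log (β/2) - 1 with hK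
  set u₀ : ℝ := min (β/4) (Real.exp (2*K/η)) with hu₀
  have hu₀pos : 0 < u₀ := lt_min (by linarith) (Real.exp_pos _)
  have hu₀lt : u₀ < β/2 := lt_of_le_of_lt (min_le_left _ _) (by linarith)
  have hmem₀ : u₀ ∈ Set.Ioo (0:ℝ) β := ⟨hu₀pos, by linarith⟩
  have hmemβ : β/2 ∈ Set.Ioo (0:ℝ) β := ⟨by linarith, by linarith⟩
  have hlt := hmono hmem₀ hmemβ hu₀lt
  have hlog : (η/2) * Real.log u₀ ≤ K := by
    have h1 : Real.log u₀ ≤ 2*K/η := by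
      calc Real.log u₀ ≤ Real.log (Real.exp (2*K/η)) :=
            Real.log_le_log hu₀pos (min_le_right _ _)
        _ = 2*K/η := Real.log_exp _
    calc (η/2) * Real.log u₀ ≤ (η/2) * (2*K/η) := by
          apply mul_le_mul_of_nonneg_left h1 (by positivity)
      _ = K := by field_simp
  have h1 := hc u₀ hmem₀
  simp only [hFdef] at hlt
  nlinarith [hlt, hlog, h1]


set_option maxHeartbeats 1000000 in
theorem stmt15 (δ : ℝ) (hδ : 0 < δ) (γ : ℝ → ℝ → ℝ)
    (hγc : ContinuousOn (fun p : ℝ × ℝ => γ p.1 p.2) (Set.Icc 0 δ ×ˢ Set.Icc 0 δ))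
    (hγpos : ∀ u ∈ Set.Icc (0:ℝ) δ, ∀ v ∈ Set.Icc (0:ℝ) δ, 0 < γ u v)
    (σ : ℝ) (hσ : 0 < σ) (ε : ℝ) (hε0 : 0 < ε) (hεδ : ε ≤ δ)
    (V : ℝ → ℝ) (hVc : ContinuousOn V (Set.Ico 0 ε)) (hV0 : V 0 = 0)
    (hVmem : ∀ u ∈ Set.Ico (0:ℝ) ε, V u ∈ Set.Icc (0:ℝ) δ)
    (hVpos : ∀ u ∈ Set.Ioo (0:ℝ) ε, 0 < V u)
    (hODE : ∀ u ∈ Set.Ioo (0:ℝ) ε, HasDerivAt V (σ - u / V u * γ u (V u)) u) :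
    2 * Real.sqrt (γ 0 0) ≤ σ ∧
    ∃ w : ℝ, Filter.Tendsto (fun u => V u / u) (nhdsWithin 0 (Set.Ioi 0)) (nhds w) ∧
      w ^ 2 - σ * w + γ 0 0 = 0 := by
  set γ₀ : ℝ := γ 0 0 with hγ₀def
  have hδmem : (0:ℝ) ∈ Set.Icc (0:ℝ) δ := ⟨le_refl _, hδ.le⟩
  have hγ₀pos : 0 < γ₀ := hγpos 0 hδmem 0 hδmem
  have hmemsq : ∀ u ∈ Set.Ioo (0:ℝ) ε, u ∈ Set.Icc (0:ℝ) δ ∧ V u ∈ Set.Icc (0:ℝ) δ :=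
    fun u hu => ⟨⟨hu.1.le, le_trans hu.2.le hεδ⟩, hVmem u ⟨hu.1.le, hu.2⟩⟩
  have hγVpos : ∀ u ∈ Set.Ioo (0:ℝ) ε, 0 < γ u (V u) :=
    fun u hu => hγpos u (hmemsq u hu).1 (V u) (hmemsq u hu).2
  -- V tends to 0 from the right
  have hIooIoi : 𝓝[Set.Ioo (0:ℝ) ε] 0 = 𝓝[>] (0:ℝ) := nhdsWithin_Ioo_eq_nhdsGT hε0
  have hV0' : Filter.Tendsto V (𝓝[>] (0:ℝ)) (𝓝 0) := by
    rw [← hIooIoi]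
    have h := (hVc 0 ⟨le_refl _, hε0⟩).mono Set.Ioo_subset_Ico_self
    have h2 : Filter.Tendsto V (𝓝[Set.Ioo (0:ℝ) ε] 0) (𝓝 (V 0)) := h
    rw [hV0] at h2
    exact h2
  -- γ(u, V u) tends to γ₀
  have hγto : Filter.Tendsto (fun u => γ u (V u)) (𝓝[>] (0:ℝ)) (𝓝 γ₀) := by
    rw [← hIooIoi]
    have hpair : Filter.Tendsto (fun u => ((u, V u) : ℝ × ℝ)) (𝓝[Set.Ioo (0:ℝ) ε] 0)
        (𝓝[Set.Icc 0 δ ×ˢ Set.Icc 0 δ] ((0:ℝ), (0:ℝ))) := by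
      apply tendsto_nhdsWithin_of_tendsto_nhds_of_eventually_within
      · have h1 : Filter.Tendsto (fun u : ℝ => u) (𝓝[Set.Ioo (0:ℝ) ε] 0) (𝓝 0) :=
          tendsto_id.mono_left nhdsWithin_le_nhds
        have h2 : Filter.Tendsto V (𝓝[Set.Ioo (0:ℝ) ε] 0) (𝓝 0) := by
          rw [hIooIoi]; exact hV0'
        exact h1.prodMk_nhds h2
      · filter_upwards [self_mem_nhdsWithin] with u hu
        exact ⟨(hmemsq u hu).1, (hmemsq u hu).2⟩
    have hcw := (hγc ((0:ℝ),(0:ℝ)) ⟨hδmem, hδmem⟩).tendsto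
    exact hcw.comp hpair
  -- upper bound V u < σ u
  have hupper : ∀ u ∈ Set.Ioo (0:ℝ) ε, V u < σ * u := by
    intro u hu
    have hsub : Set.Icc (0:ℝ) u ⊆ Set.Ico (0:ℝ) ε :=
      fun x hx => ⟨hx.1, lt_of_le_of_lt hx.2 hu.2⟩
    have hmono : StrictMonoOn (fun t => σ * t - V t) (Set.Icc (0:ℝ) u) := by
      apply strictMonoOn_of_deriv_pos (convex_Icc _ _)
      · exact ((continuous_const.mul continuous_id).continuousOn).sub (hVc.mono hsub)
      · intro x hx
        rw [interior_Icc] at hx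
        have hx' : x ∈ Set.Ioo (0:ℝ) ε := ⟨hx.1, hx.2.trans hu.2⟩
        have hD : HasDerivAt (fun t => σ * t - V t) (σ * 1 - (σ - x / V x * γ x (V x))) x :=
          ((hasDerivAt_id x).const_mul σ).sub (hODE x hx')
        rw [hD.deriv]
        have h1 : 0 < x / V x * γ x (V x) :=
          mul_pos (div_pos hx.1 (hVpos x hx')) (hγVpos x hx')
        linarith
    have := hmono (Set.left_mem_Icc.2 hu.1.le) (Set.right_mem_Icc.2 hu.1.le) hu.1
    simp only [hV0, mul_zero, sub_zero] at this
    linarith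
  -- the ratio r and its derivative
  set r : ℝ → ℝ := fun u => V u / u with hrdef
  set rd : ℝ → ℝ := fun u => ((σ - u / V u * γ u (V u)) * u - V u * 1) / u ^ 2 with hrddef
  have hr' : ∀ u ∈ Set.Ioo (0:ℝ) ε, HasDerivAt r (rd u) u :=
    fun u hu => (hODE u hu).div (hasDerivAt_id u) (ne_of_gt hu.1)
  have hrdmul : ∀ u ∈ Set.Ioo (0:ℝ) ε, rd u * u = σ - r u - γ u (V u) / r u := by
    intro u hu
    have hu0 : u ≠ 0 := ne_of_gt hu.1
    have hV0' : V u ≠ 0 := ne_of_gt (hVpos u hu)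
    simp only [hrddef, hrdef]
    field_simp
    ring
  -- lower bound: eventually c ≤ r u
  have hev1 : ∀ᶠ u in 𝓝[>] (0:ℝ), γ₀/2 < γ u (V u) ∧ u ∈ Set.Ioo (0:ℝ) ε := by
    have h1 : ∀ᶠ u in 𝓝[>] (0:ℝ), γ₀/2 < γ u (V u) :=
      hγto.eventually (eventually_gt_nhds (by linarith))
    have h2 : ∀ᶠ u in 𝓝[>] (0:ℝ), u ∈ Set.Ioo (0:ℝ) ε :=
      eventually_of_mem (Ioo_mem_nhdsGT_of_mem ⟨le_refl _, hε0⟩) (fun x hx => hx)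
    exact h1.and h2
  obtain ⟨ε₁, hε₁pos', hε₁sub⟩ := mem_nhdsGT_iff_exists_Ioo_subset.1 hev1
  have hε₁pos : 0 < ε₁ := hε₁pos'
  set c : ℝ := γ₀ / (4*σ) with hcdef
  have hcpos : 0 < c := by positivity
  set ε₂ : ℝ := ε₁ * σ / (2*(σ + c)) with hε₂def
  have hε₂pos : 0 < ε₂ := by positivity
  have hlowmem : ∀ u ∈ Set.Ioo (0:ℝ) ε₂, c * u ≤ V u := by
    intro u₁ hu₁
    by_contra hcon
    push_neg at hcon
    have hu₁pos : 0 < u₁ := hu₁.1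
    set T : ℝ := u₁ * (σ + c) / σ with hTdef
    have hTu₁ : u₁ < T := by
      rw [hTdef, lt_div_iff₀ hσ]
      nlinarith
    have hTε₁ : T < ε₁ := by
      rw [hTdef, div_lt_iff₀ hσ]
      have : u₁ < ε₂ := hu₁.2
      rw [hε₂def] at this
      rw [lt_div_iff₀ (by positivity : (0:ℝ) < 2*(σ+c))] at this
      nlinarith
    have hsubIoo : Set.Icc u₁ T ⊆ Set.Ioo (0:ℝ) ε₁ :=
      fun x hx => ⟨lt_of_lt_of_le hu₁pos hx.1, lt_of_le_of_lt hx.2 hTε₁⟩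
    have hsubε : ∀ x ∈ Set.Icc u₁ T, x ∈ Set.Ioo (0:ℝ) ε := by
      intro x hx
      exact (hε₁sub ⟨(hsubIoo hx).1, (hsubIoo hx).2⟩).2
    set φ : ℝ → ℝ := fun u => V u + σ * (u - u₁) - c * u₁ with hφdef
    set φd : ℝ → ℝ := fun u => (σ - u / V u * γ u (V u)) + σ * 1 with hφddef
    have hφ : ∀ x ∈ Set.Icc u₁ T, HasDerivAt φ (φd x) x := by
      intro x hx
      have := (hODE x (hsubε x hx)).add (((hasDerivAt_id x).sub_const u₁).const_mul σ)
      exact this.sub_const (c*u₁)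
    have hφb : φ u₁ < 0 := by simp only [hφdef]; simp; linarith
    have hφa : (0:ℝ) < φ T := by
      have hVT : 0 < V T := hVpos T (hsubε T ⟨hTu₁.le, le_refl _⟩)
      have : σ * (T - u₁) = c * u₁ := by
        rw [hTdef]; field_simp; ring
      simp only [hφdef]
      linarith
    obtain ⟨t, htmem, htz, htd⟩ := crossing hTu₁ hφ hφb hφa
    have htε : t ∈ Set.Ioo (0:ℝ) ε := hsubε t ⟨htmem.1, htmem.2.le⟩
    have htε₁ : t ∈ Set.Ioo (0:ℝ) ε₁ := hsubIoo ⟨htmem.1, htmem.2.le⟩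
    have hγt : γ₀/2 < γ t (V t) := (hε₁sub ⟨htε₁.1, htε₁.2⟩).1
    have hVt : 0 < V t := hVpos t htε
    have hVtle : V t ≤ c * t := by
      have h1 : V t = c * u₁ - σ * (t - u₁) := by
        simp only [hφdef] at htz; linarith
      have h2 : u₁ ≤ t := htmem.1
      nlinarith
    -- derivative contradiction
    have h1c : 1/c ≤ t / V t := by
      rw [div_le_div_iff₀ hcpos hVt]
      nlinarith [htε.1]
    have hbig : 2*σ < t / V t * γ t (V t) := by
      have h2 : 1/c * (γ₀/2) = 2*σ := by
        rw [hcdef]; field_simp; ring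
      have h3 : 1/c * (γ₀/2) ≤ t / V t * (γ₀/2) :=
        mul_le_mul_of_nonneg_right h1c (by linarith)
      have h4 : t / V t * (γ₀/2) < t / V t * γ t (V t) := by
        apply mul_lt_mul_of_pos_left hγt
        exact lt_of_lt_of_le (by positivity) h1c
      linarith
    simp only [hφddef] at htd
    linarith
  have hevlow : ∀ᶠ u in 𝓝[>] (0:ℝ), c ≤ r u := by
    filter_upwards [Ioo_mem_nhdsGT_of_mem (Set.left_mem_Ico.2 hε₂pos)] with u hu
    rw [hrdef]
    rw [le_div_iff₀ hu.1]
    exact hlowmem u hu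
  have hevup : ∀ᶠ u in 𝓝[>] (0:ℝ), r u ≤ σ := by
    filter_upwards [Ioo_mem_nhdsGT_of_mem (Set.left_mem_Ico.2 hε0)] with u hu
    rw [hrdef, div_le_iff₀ hu.1]
    nlinarith [hupper u hu]
  have hbddle : Filter.IsBoundedUnder (· ≤ ·) (𝓝[>] (0:ℝ)) r :=
    Filter.isBoundedUnder_of_eventually_le hevup
  have hbddge : Filter.IsBoundedUnder (· ≥ ·) (𝓝[>] (0:ℝ)) r :=
    Filter.isBoundedUnder_of_eventually_ge hevlow
  set l : ℝ := Filter.liminf r (𝓝[>] (0:ℝ)) with hldef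
  set L : ℝ := Filter.limsup r (𝓝[>] (0:ℝ)) with hLdef
  have hcl : c ≤ l := Filter.le_liminf_of_le hbddle.isCoboundedUnder_ge hevlow
  have hLσ : L ≤ σ := Filter.limsup_le_of_le hbddge.isCoboundedUnder_le hevup
  have hlL : l ≤ L := Filter.liminf_le_limsup hbddle hbddge
  -- crossing points give quadratic identity for any m between l and L
  have hcross : ∀ m : ℝ, 0 < m → (∃ᶠ u in 𝓝[>] (0:ℝ), m < r u) → (∃ᶠ u in 𝓝[>] (0:ℝ), r u < m) →
      (∃ᶠ u in 𝓝[>] (0:ℝ), γ u (V u) ≤ (σ - m) * m) := by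
    intro m hm0 hfgt hflt
    rw [Filter.frequently_iff]
    intro U hU
    obtain ⟨b0, hb0, hb0sub⟩ := mem_nhdsGT_iff_exists_Ioo_subset.1 hU
    set β := min b0 ε with hβdef
    have hβpos : 0 < β := lt_min hb0 hε0
    obtain ⟨a, hagt, hamem⟩ :=
      (hfgt.and_eventually (eventually_of_mem (Ioo_mem_nhdsGT_of_mem
        (Set.left_mem_Ico.2 hβpos)) (fun x hx => hx))).exists
    obtain ⟨b, hblt, hbmem⟩ :=
      (hflt.and_eventually (eventually_of_mem (Ioo_mem_nhdsGT_of_mem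
        (Set.left_mem_Ico.2 hamem.1)) (fun x hx => hx))).exists
    have hsubε : Set.Icc b a ⊆ Set.Ioo (0:ℝ) ε := by
      intro x hx
      refine ⟨lt_of_lt_of_le hbmem.1 hx.1, ?_⟩
      exact lt_of_le_of_lt hx.2 (lt_of_lt_of_le hamem.2 (min_le_right _ _))
    obtain ⟨t, htmem, htz, htd⟩ := crossing hbmem.2
      (fun x hx => hr' x (hsubε hx)) hblt hagt
    have htε : t ∈ Set.Ioo (0:ℝ) ε := hsubε ⟨htmem.1, htmem.2.le⟩
    refine ⟨t, hb0sub ⟨htε.1, lt_of_lt_of_le (htmem.2.trans hamem.2) (min_le_left _ _)⟩, ?_⟩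
    -- from 0 ≤ rd t and r t = m deduce γ ≤ (σ - m) m
    have hkey := hrdmul t htε
    rw [htz] at hkey
    have h2 : 0 ≤ σ - m - γ t (V t) / m := by
      have := mul_nonneg htd htε.1.le
      rw [hkey] at this
      linarith
    have h3 : γ t (V t) / m ≤ σ - m := by linarith
    calc γ t (V t) = γ t (V t) / m * m := by field_simp
      _ ≤ (σ - m) * m := mul_le_mul_of_nonneg_right h3 hm0.le
  have hcross' : ∀ m : ℝ, 0 < m → (∃ᶠ u in 𝓝[>] (0:ℝ), m < r u) → (∃ᶠ u in 𝓝[>] (0:ℝ), r u < m) →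
      (∃ᶠ u in 𝓝[>] (0:ℝ), (σ - m) * m ≤ γ u (V u)) := by
    intro m hm0 hfgt hflt
    rw [Filter.frequently_iff]
    intro U hU
    obtain ⟨b0, hb0, hb0sub⟩ := mem_nhdsGT_iff_exists_Ioo_subset.1 hU
    set β := min b0 ε with hβdef
    have hβpos : 0 < β := lt_min hb0 hε0
    obtain ⟨a, hagt, hamem⟩ :=
      (hflt.and_eventually (eventually_of_mem (Ioo_mem_nhdsGT_of_mem
        (Set.left_mem_Ico.2 hβpos)) (fun x hx => hx))).exists
    obtain ⟨b, hblt, hbmem⟩ :=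
      (hfgt.and_eventually (eventually_of_mem (Ioo_mem_nhdsGT_of_mem
        (Set.left_mem_Ico.2 hamem.1)) (fun x hx => hx))).exists
    have hsubε : Set.Icc b a ⊆ Set.Ioo (0:ℝ) ε := by
      intro x hx
      refine ⟨lt_of_lt_of_le hbmem.1 hx.1, ?_⟩
      exact lt_of_le_of_lt hx.2 (lt_of_lt_of_le hamem.2 (min_le_right _ _))
    obtain ⟨t, htmem, htz, htd⟩ := crossing (f := fun u => -(r u)) (f' := fun u => -(rd u))
      (c := -m) hbmem.2 (fun x hx => (hr' x (hsubε hx)).neg)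
      (by simpa using hblt) (by simpa using hagt)
    have htε : t ∈ Set.Ioo (0:ℝ) ε := hsubε ⟨htmem.1, htmem.2.le⟩
    refine ⟨t, hb0sub ⟨htε.1, lt_of_lt_of_le (htmem.2.trans hamem.2) (min_le_left _ _)⟩, ?_⟩
    have htz' : r t = m := by linarith [neg_eq_iff_eq_neg.1 htz]
    have hkey := hrdmul t htε
    rw [htz'] at hkey
    have h2 : σ - m - γ t (V t) / m ≤ 0 := by
      have h0 : rd t ≤ 0 := by linarith [htd]
      have := mul_nonpos_of_nonpos_of_nonneg h0 htε.1.le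
      rw [hkey] at this
      linarith
    have h3 : σ - m ≤ γ t (V t) / m := by linarith
    calc (σ - m) * m ≤ γ t (V t) / m * m := mul_le_mul_of_nonneg_right h3 hm0.le
      _ = γ t (V t) := by field_simp
  have hquad : ∀ m : ℝ, l < m → m < L → γ₀ = (σ - m) * m := by
    intro m hm1 hm2
    have hm0 : 0 < m := lt_of_le_of_lt (lt_of_lt_of_le hcpos hcl).le hm1
    have hfgt : ∃ᶠ u in 𝓝[>] (0:ℝ), m < r u :=
      Filter.frequently_lt_of_lt_limsup hbddge.isCoboundedUnder_le hm2
    have hflt : ∃ᶠ u in 𝓝[>] (0:ℝ), r u < m :=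
      Filter.frequently_lt_of_liminf_lt hbddle.isCoboundedUnder_ge hm1
    have h1 := hcross m hm0 hfgt hflt
    have h2 := hcross' m hm0 hfgt hflt
    have hle : γ₀ ≤ (σ - m) * m := by
      by_contra hnot
      push_neg at hnot
      have hev : ∀ᶠ u in 𝓝[>] (0:ℝ), (σ - m) * m < γ u (V u) :=
        hγto.eventually (eventually_gt_nhds hnot)
      obtain ⟨x, hx1, hx2⟩ := (h1.and_eventually hev).exists
      linarith
    have hge : (σ - m) * m ≤ γ₀ := by
      by_contra hnot
      push_neg at hnot
      have hev : ∀ᶠ u in 𝓝[>] (0:ℝ), γ u (V u) < (σ - m) * m :=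
        hγto.eventually (eventually_lt_nhds hnot)
      obtain ⟨x, hx1, hx2⟩ := (h2.and_eventually hev).exists
      linarith
    linarith
  -- l = L
  have hlLeq : l = L := by
    by_contra hne
    have hlt : l < L := lt_of_le_of_ne hlL hne
    have key : ∀ x y : ℝ, l < x → x < L → l < y → y < L → x ≠ y → σ = x + y := by
      intro x y hx1 hx2 hy1 hy2 hxy
      have ex := hquad x hx1 hx2
      have ey := hquad y hy1 hy2
      have h : σ * (x - y) = (x + y) * (x - y) := by linear_combination ey - ex
      exact mul_right_cancel₀ (sub_ne_zero.2 hxy) h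
    have h12 := key (l + (L-l)/4) (l + (L-l)/2) (by linarith) (by linarith)
      (by linarith) (by linarith) (by intro h; linarith)
    have h13 := key (l + (L-l)/4) (l + 3*(L-l)/4) (by linarith) (by linarith)
      (by linarith) (by linarith) (by intro h; linarith)
    linarith
  set w : ℝ := l with hwdef
  have hw0 : 0 < w := lt_of_lt_of_le hcpos hcl
  have hrw : Filter.Tendsto r (𝓝[>] (0:ℝ)) (𝓝 w) :=
    tendsto_of_le_liminf_of_limsup_le (le_refl _) (le_of_eq hlLeq.symm) hbddle hbddge
  -- show the quadratic identity for w via the log blow-up argument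
  have hψ : γ₀ = (σ - w) * w := by
    by_contra hψne
    obtain ⟨η, hηdef⟩ : ∃ η : ℝ, η = σ - w - γ₀ / w := ⟨_, rfl⟩
    have hηne : η ≠ 0 := by
      intro h
      apply hψne
      have : γ₀ / w = σ - w := by rw [hηdef] at h; linarith
      calc γ₀ = γ₀ / w * w := by field_simp
        _ = (σ - w) * w := by rw [this]
    have htend2 : Filter.Tendsto (fun u => σ - r u - γ u (V u) / r u) (𝓝[>] (0:ℝ)) (𝓝 η) := by
      rw [hηdef]
      exact (tendsto_const_nhds.sub hrw).sub (hγto.div hrw (ne_of_gt hw0))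
    rcases lt_or_gt_of_ne hηne with hηneg | hηpos
    · -- η < 0 : apply log_blowup to -r
      have hev2 : ∀ᶠ u in 𝓝[>] (0:ℝ),
          (σ - r u - γ u (V u) / r u < η/2) ∧ u ∈ Set.Ioo (0:ℝ) ε ∧ r u ≤ σ := by
        refine (htend2.eventually (eventually_lt_nhds (b := η/2) (by linarith))).and
          ((eventually_of_mem (Ioo_mem_nhdsGT_of_mem (Set.left_mem_Ico.2 hε0))
            (fun x hx => hx)).and hevup)
      obtain ⟨β, hβpos, hβsub⟩ := mem_nhdsGT_iff_exists_Ioo_subset.1 hev2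
      refine log_blowup (c := -σ) hβpos (η := -η) (by linarith) (fun u => -(r u)) (fun u => -(rd u))
        (fun u hu => (hr' u (hβsub hu).2.1).neg) ?_
        (fun u hu => by simpa using neg_le_neg (hβsub hu).2.2)
      intro u hu
      show -η / (2*u) < -(rd u)
      obtain ⟨h1, h2, h3⟩ := hβsub hu
      have hkey := hrdmul u h2
      have hu0 : 0 < u := hu.1
      have h4 : rd u * u < η / 2 := by rw [hkey]; exact h1
      rw [div_lt_iff₀ (by positivity : (0:ℝ) < 2*u)]
      nlinarith
    · -- η > 0 : apply log_blowup to r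
      have hev2 : ∀ᶠ u in 𝓝[>] (0:ℝ),
          (η/2 < σ - r u - γ u (V u) / r u) ∧ u ∈ Set.Ioo (0:ℝ) ε ∧ c ≤ r u := by
        refine (htend2.eventually (eventually_gt_nhds (b := η/2) (by linarith))).and
          ((eventually_of_mem (Ioo_mem_nhdsGT_of_mem (Set.left_mem_Ico.2 hε0))
            (fun x hx => hx)).and hevlow)
      obtain ⟨β, hβpos, hβsub⟩ := mem_nhdsGT_iff_exists_Ioo_subset.1 hev2
      refine log_blowup hβpos hηpos r rd
        (fun u hu => hr' u (hβsub hu).2.1) ?_ (fun u hu => (hβsub hu).2.2)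
      intro u hu
      obtain ⟨h1, h2, h3⟩ := hβsub hu
      have hkey := hrdmul u h2
      have hu0 : 0 < u := hu.1
      have h4 : η / 2 < rd u * u := by rw [hkey]; exact h1
      rw [div_lt_iff₀ (by positivity : (0:ℝ) < 2*u)]
      nlinarith
  -- conclude
  have hquadw : w ^ 2 - σ * w + γ₀ = 0 := by linear_combination hψ
  constructor
  · have hdisc : 4 * γ₀ ≤ σ ^ 2 := by nlinarith [sq_nonneg (σ - 2*w)]
    have h4 : Real.sqrt (4*γ₀) = 2 * Real.sqrt γ₀ := by
      rw [show (4:ℝ)*γ₀ = (2:ℝ)^2*γ₀ by norm_num, Real.sqrt_mul (by positivity),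
        Real.sqrt_sq (by norm_num)]
    calc 2 * Real.sqrt γ₀ = Real.sqrt (4*γ₀) := h4.symm
      _ ≤ Real.sqrt (σ^2) := Real.sqrt_le_sqrt hdisc
      _ = σ := Real.sqrt_sq hσ.le
  · exact ⟨w, hrw, hquadw⟩
end
end

section
/- Assume (H_c). Then σ_s ≥ 2·√( (∂a/∂s)(0,0) · f'(0) ). -/
open Set Filter Topology
open scoped ENNReal

noncomputable section

lemma aux_mem_omega_zero (F : FluxData) {u : ℝ} (hu : u ∈ Set.Icc (0:ℝ) 1) :
    (u, (0:ℝ)) ∈ OmegaSet F.ω := by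
  refine ⟨hu, ?_⟩
  simp only [abs_zero, ENNReal.ofReal_zero]
  exact F.ω_pos u hu

lemma aux_a_zero (F : FluxData) {u : ℝ} (hu : u ∈ Set.Icc (0:ℝ) 1) : F.a u 0 = 0 := by
  have h := F.a_odd u 0 (aux_mem_omega_zero F hu)
  rw [neg_zero] at h
  linarith

lemma aux_mem_omega_between (F : FluxData) {u s₁ s₂ θ : ℝ}
    (h1 : (u, s₁) ∈ OmegaSet F.ω) (h2 : (u, s₂) ∈ OmegaSet F.ω)
    (hθ : θ ∈ Set.Icc s₁ s₂) : (u, θ) ∈ OmegaSet F.ω := by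
  refine ⟨h1.1, lt_of_le_of_lt ?_ (max_lt h1.2 h2.2)⟩
  have := ENNReal.ofReal_le_ofReal (abs_le_max_abs_abs hθ.1 hθ.2)
  refine this.trans ?_
  rcases max_cases |s₁| |s₂| with ⟨h,_⟩|⟨h,_⟩ <;> rw [h]
  · exact le_max_left _ _
  · exact le_max_right _ _

lemma aux_a_strictMono (F : FluxData) {u s₁ s₂ : ℝ}
    (h1 : (u, s₁) ∈ OmegaSet F.ω) (h2 : (u, s₂) ∈ OmegaSet F.ω) (h12 : s₁ < s₂) :
    F.a u s₁ < F.a u s₂ := by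
  have hmem : ∀ θ ∈ Set.Icc s₁ s₂, (u, θ) ∈ OmegaSet F.ω := fun θ hθ =>
    aux_mem_omega_between F h1 h2 hθ
  have hder : ∀ θ ∈ Set.Icc s₁ s₂, HasDerivAt (F.a u) (deriv (F.a u) θ) θ := by
    intro θ hθ
    obtain ⟨d, _, hd⟩ := F.a_deriv_pos u θ (hmem θ hθ)
    rwa [hd.deriv]
  have hderpos : ∀ θ ∈ Set.Icc s₁ s₂, 0 < deriv (F.a u) θ := by
    intro θ hθ
    obtain ⟨d, hdpos, hd⟩ := F.a_deriv_pos u θ (hmem θ hθ)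
    rwa [hd.deriv]
  have hcont : ContinuousOn (F.a u) (Set.Icc s₁ s₂) := fun θ hθ =>
    ((hder θ hθ).continuousAt).continuousWithinAt
  obtain ⟨c, hc, hceq⟩ := exists_hasDerivAt_eq_slope (F.a u) (fun θ => deriv (F.a u) θ) h12
    hcont (fun θ hθ => hder θ (Set.mem_Icc_of_Ioo hθ))
  have hcpos := hderpos c (Set.mem_Icc_of_Ioo hc)
  rw [hceq] at hcpos
  have := mul_pos hcpos (sub_pos.mpr h12)
  rw [div_mul_cancel₀] at this
  · linarith
  · exact ne_of_gt (sub_pos.mpr h12)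

lemma aux_rect (F : FluxData) : ∃ δ' r : ℝ, 0 < δ' ∧ δ' ≤ 1 ∧ 0 < r ∧
    (Set.Icc (0:ℝ) δ' ×ˢ Set.Icc (-r) r) ⊆ OmegaSet F.ω := by
  have h0 : (0:ℝ) ∈ Set.Icc (0:ℝ) 1 := ⟨le_rfl, zero_le_one⟩
  obtain ⟨q, hq0, hq1, hq2⟩ := ENNReal.lt_iff_exists_real_btwn.mp (F.ω_pos 0 h0)
  have hqpos : 0 < q := ENNReal.ofReal_pos.mp hq1
  have hev := F.ω_lsc 0 h0 (ENNReal.ofReal q) hq2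
  rw [eventually_iff, Metric.mem_nhdsWithin_iff] at hev
  obtain ⟨ε, hε, hsub⟩ := hev
  refine ⟨min (ε/2) 1, q/2, lt_min (by linarith) one_pos, min_le_right _ _, by linarith, ?_⟩
  rintro ⟨u, s⟩ ⟨hu, hs⟩
  simp only [Set.mem_Icc] at hu hs
  have hu1 : u ∈ Set.Icc (0:ℝ) 1 := ⟨hu.1, hu.2.trans (min_le_right _ _)⟩
  have huω : ENNReal.ofReal q < F.ω u := by
    apply hsub
    refine ⟨?_, hu1⟩
    rw [Metric.mem_ball, Real.dist_eq, sub_zero, abs_of_nonneg hu.1]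
    exact lt_of_le_of_lt (hu.2.trans (min_le_left _ _)) (by linarith)
  refine ⟨hu1, lt_trans ?_ huω⟩
  have habs : |s| ≤ q/2 := abs_le.mpr hs
  calc ENNReal.ofReal |s| ≤ ENNReal.ofReal (q/2) := ENNReal.ofReal_le_ofReal habs
    _ < ENNReal.ofReal q := by
        rw [ENNReal.ofReal_lt_ofReal_iff hqpos]; linarith

lemma aux_a_est (F : FluxData) {da0 : ℝ} (hda0 : HasDerivAt (F.a 0) da0 0) {ε : ℝ} (hε : 0 < ε) :
    ∃ δ sb : ℝ, 0 < δ ∧ δ ≤ 1 ∧ 0 < sb ∧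
      ∀ u, 0 < u → u < δ → ∀ s, 0 < s → s ≤ sb →
        (u, s) ∈ OmegaSet F.ω ∧ (da0 - ε) * s ≤ F.a u s ∧ F.a u s ≤ (da0 + ε) * s := by
  obtain ⟨δ', r, hδ'0, hδ'1, hr0, hRΩ⟩ := aux_rect F
  set A : ℝ × ℝ → ℝ := fun p => F.a p.1 p.2 with hA
  set R : Set (ℝ × ℝ) := Set.Icc (0:ℝ) δ' ×ˢ Set.Icc (-r) r with hR
  have huniq : UniqueDiffOn ℝ R := (uniqueDiffOn_Icc hδ'0).prod (uniqueDiffOn_Icc (by linarith))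
  have hA1 : ContDiffOn ℝ 1 A R := F.a_C1.mono hRΩ
  set D : ℝ × ℝ → ℝ := fun p => (fderivWithin ℝ A R p) ((0:ℝ), (1:ℝ)) with hD
  have hDcont : ContinuousOn D R :=
    (hA1.continuousOn_fderivWithin huniq le_rfl).clm_apply continuousOn_const
  have hmem00 : ((0:ℝ), (0:ℝ)) ∈ R :=
    ⟨⟨le_rfl, le_of_lt hδ'0⟩, ⟨neg_nonpos.mpr hr0.le, le_of_lt hr0⟩⟩
  have hD00 : D (0, 0) = da0 := by
    have hdiff : DifferentiableWithinAt ℝ A R ((0:ℝ),(0:ℝ)) :=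
      (hA1.differentiableOn one_ne_zero) _ hmem00
    have hι : HasDerivWithinAt (fun s : ℝ => ((0:ℝ), s)) ((0:ℝ), (1:ℝ))
        (Set.Icc (-r) r) 0 :=
      ((hasDerivAt_const (0:ℝ) (0:ℝ)).prodMk (hasDerivAt_id 0)).hasDerivWithinAt
    have hcomp : HasDerivWithinAt (fun s : ℝ => F.a 0 s) (D (0,0)) (Set.Icc (-r) r) 0 := by
      have := hdiff.hasFDerivWithinAt.comp_hasDerivWithinAt 0 hι
        (fun s hs => ⟨⟨le_rfl, le_of_lt hδ'0⟩, hs⟩)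
      exact this
    have hud : UniqueDiffWithinAt ℝ (Set.Icc (-r) r) 0 :=
      (uniqueDiffOn_Icc (by linarith)) 0 ⟨by linarith, le_of_lt hr0⟩
    have h1 := hcomp.derivWithin hud
    have h2 := (hda0.hasDerivWithinAt (s := Set.Icc (-r) r)).derivWithin hud
    rw [← h1, ← h2]
  have hDint : ∀ p : ℝ × ℝ, p ∈ Set.Ioo (0:ℝ) δ' ×ˢ Set.Ioo (-r) r →
      HasDerivAt (F.a p.1) (D p) p.2 := by
    rintro ⟨u, s⟩ hp
    have hopen : IsOpen (Set.Ioo (0:ℝ) δ' ×ˢ Set.Ioo (-r) r) := isOpen_Ioo.prod isOpen_Ioo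
    have hnhds : R ∈ 𝓝 ((u, s) : ℝ × ℝ) :=
      Filter.mem_of_superset (hopen.mem_nhds hp)
        (Set.prod_mono Set.Ioo_subset_Icc_self Set.Ioo_subset_Icc_self)
    have hsubR : (u, s) ∈ R :=
      (Set.prod_mono Set.Ioo_subset_Icc_self Set.Ioo_subset_Icc_self) hp
    have hdiffAt : DifferentiableAt ℝ A (u, s) :=
      ((hA1.differentiableOn one_ne_zero) _ hsubR).differentiableAt hnhds
    have hι : HasDerivAt (fun t : ℝ => (u, t)) ((0:ℝ), (1:ℝ)) s :=
      (hasDerivAt_const s u).prodMk (hasDerivAt_id s)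
    have := hdiffAt.hasFDerivAt.comp_hasDerivAt s hι
    simp only [hD]
    rw [fderivWithin_of_mem_nhds hnhds]
    exact this
  -- continuity of D at (0,0)
  have htend : Filter.Tendsto D (𝓝[R] ((0:ℝ),(0:ℝ))) (𝓝 da0) := by
    have := hDcont _ hmem00
    rwa [ContinuousWithinAt, hD00] at this
  have hev : ∀ᶠ p in 𝓝[R] ((0:ℝ),(0:ℝ)), dist (D p) da0 < ε :=
    htend (Metric.ball_mem_nhds _ hε)
  rw [eventually_iff, Metric.mem_nhdsWithin_iff] at hev
  obtain ⟨ρ, hρ, hsub⟩ := hev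
  refine ⟨min δ' ρ / 2, min r ρ / 2, by positivity, ?_, by positivity, ?_⟩
  · have h1 := min_le_left δ' ρ
    linarith
  intro u hu0 huδ s hs0 hssb
  have huδ' : u < δ' := lt_of_lt_of_le huδ (by have := min_le_left δ' ρ; linarith)
  have huρ : u < ρ := lt_of_lt_of_le huδ (by have := min_le_right δ' ρ; linarith)
  have hsr : s < r := lt_of_le_of_lt hssb (by have := min_le_left r ρ; linarith)
  have hsρ : s < ρ := lt_of_le_of_lt hssb (by have := min_le_right r ρ; linarith)
  have hmemR : ∀ θ : ℝ, 0 ≤ θ → θ ≤ s → ((u, θ) : ℝ × ℝ) ∈ R := by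
    intro θ h1 h2
    exact ⟨⟨le_of_lt hu0, le_of_lt huδ'⟩, ⟨by linarith, by linarith⟩⟩
  have hmemΩ : (u, s) ∈ OmegaSet F.ω := hRΩ (hmemR s (le_of_lt hs0) le_rfl)
  refine ⟨hmemΩ, ?_⟩
  have hcont : ContinuousOn (F.a u) (Set.Icc 0 s) := by
    have : ContinuousOn (fun θ : ℝ => A (u, θ)) (Set.Icc 0 s) :=
      hA1.continuousOn.comp ((continuous_const.prodMk continuous_id).continuousOn)
        (fun θ hθ => hmemR θ hθ.1 hθ.2)
    exact this
  have hder : ∀ θ ∈ Set.Ioo (0:ℝ) s, HasDerivAt (F.a u) (D (u, θ)) θ := by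
    intro θ hθ
    exact hDint (u, θ) ⟨⟨hu0, huδ'⟩, ⟨by linarith [hθ.1], by linarith [hθ.2]⟩⟩
  obtain ⟨θ₀, hθ₀, hθ₀eq⟩ := exists_hasDerivAt_eq_slope (F.a u) (fun θ => D (u, θ)) hs0 hcont hder
  have hu1 : u ∈ Set.Icc (0:ℝ) 1 := ⟨le_of_lt hu0, by linarith⟩
  have ha0 : F.a u 0 = 0 := aux_a_zero F hu1
  rw [ha0, sub_zero, sub_zero] at hθ₀eq
  have hdist : dist (D (u, θ₀)) da0 < ε := by
    apply hsub
    refine ⟨?_, hmemR θ₀ (le_of_lt hθ₀.1) (le_of_lt hθ₀.2)⟩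
    rw [Metric.mem_ball, Prod.dist_eq]
    apply max_lt
    · rw [Real.dist_eq, sub_zero, abs_of_pos hu0]; exact huρ
    · rw [Real.dist_eq, sub_zero, abs_of_pos hθ₀.1]; linarith [hθ₀.2]
  rw [hθ₀eq, Real.dist_eq, abs_sub_lt_iff] at hdist
  constructor
  · rw [← sub_nonneg]
    have h1 : da0 - ε < F.a u s / s := by linarith [hdist.2]
    have := (lt_div_iff₀ hs0).mp h1
    linarith
  · have h1 : F.a u s / s < da0 + ε := by linarith [hdist.1]
    have := (div_lt_iff₀ hs0).mp h1
    linarith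

lemma aux_ode (σ δ c' : ℝ) (hσ0 : 0 ≤ σ) (hδ0 : 0 < δ) (hδ1 : δ ≤ 1) (hc' : σ^2/4 < c')
    (V : ℝ → ℝ) (hVc : ContinuousOn V (Set.Icc (0:ℝ) 1)) (hV0 : V 0 = 0)
    (hVpos : ∀ u ∈ Set.Ioo (0:ℝ) δ, 0 < V u)
    (hkey : ∀ u ∈ Set.Ioo (0:ℝ) δ, ∃ dv, HasDerivAt V dv u ∧ dv ≤ σ - c' * u / V u ∧ dv ≤ σ) :
    False := by
  obtain ⟨κ, hκ⟩ : ∃ κ : ℝ, κ = c' - σ^2/4 := ⟨_, rfl⟩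
  have hκpos : 0 < κ := by rw [hκ]; linarith
  -- Step 1 : V u ≤ σ u on Ioo 0 δ
  have hVle : ∀ u ∈ Set.Ioo (0:ℝ) δ, V u ≤ σ * u := by
    set φ : ℝ → ℝ := fun t => σ * t - V t with hφ
    have hφc : ContinuousOn φ (Set.Icc 0 δ) :=
      (continuous_const.mul continuous_id).continuousOn.sub
        (hVc.mono (Set.Icc_subset_Icc le_rfl hδ1))
    have hφd : ∀ x ∈ Set.Ioo (0:ℝ) δ, ∃ dv, HasDerivAt V dv x ∧ HasDerivAt φ (σ - dv) x ∧ dv ≤ σ := by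
      intro x hx
      obtain ⟨dv, hd, _, h2⟩ := hkey x hx
      refine ⟨dv, hd, ?_, h2⟩
      have := ((hasDerivAt_id x).const_mul σ).sub hd
      rw [mul_one] at this; exact this
    have hφm : MonotoneOn φ (Set.Icc 0 δ) := by
      apply monotoneOn_of_deriv_nonneg (convex_Icc _ _) hφc
      · intro x hx
        rw [interior_Icc] at hx
        obtain ⟨dv, _, hdφ, _⟩ := hφd x hx
        exact hdφ.differentiableAt.differentiableWithinAt
      · intro x hx
        rw [interior_Icc] at hx
        obtain ⟨dv, _, hdφ, h2⟩ := hφd x hx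
        rw [hdφ.deriv]; linarith
    intro u hu
    have h := hφm ⟨le_rfl, hδ0.le⟩ ⟨hu.1.le, hu.2.le⟩ hu.1.le
    simp only [hφ, hV0, mul_zero, sub_zero] at h
    linarith
  -- Step 2 : G antitone
  set G : ℝ → ℝ := fun u => (V u / u)^2 + 2 * κ * Real.log u with hG
  have hGd : ∀ x ∈ Set.Ioo (0:ℝ) δ, ∃ e, HasDerivAt G e x ∧ e ≤ 0 := by
    intro x hx
    obtain ⟨dv, hd, h1, _⟩ := hkey x hx
    have hx0 : x ≠ 0 := ne_of_gt hx.1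
    have hvx := hVpos x hx
    have hW : HasDerivAt (fun u => V u / u) ((dv * x - V x * 1) / x^2) x :=
      hd.div (hasDerivAt_id x) hx0
    have hW2 : HasDerivAt (fun u => (V u / u)^2)
        ((2:ℕ) * (V x / x)^(2-1) * ((dv * x - V x * 1) / x^2)) x := hW.pow 2
    have hL : HasDerivAt (fun u => 2 * κ * Real.log u) (2 * κ * x⁻¹) x :=
      (Real.hasDerivAt_log hx0).const_mul (2*κ)
    refine ⟨_, hW2.add hL, ?_⟩
    obtain ⟨W, hWdef⟩ : ∃ W : ℝ, V x / x = W := ⟨_, rfl⟩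
    have hWpos : 0 < W := hWdef ▸ div_pos hvx hx.1
    have hcW : c' * x / V x = c' / W := by
      rw [← hWdef]; field_simp
    have hdvW : dv * W ≤ σ * W - c' := by
      have h1' : dv ≤ σ - c' / W := by rw [← hcW]; exact h1
      have := mul_le_mul_of_nonneg_right h1' hWpos.le
      rw [sub_mul, div_mul_cancel₀ _ (ne_of_gt hWpos)] at this
      linarith
    have hid : (2:ℕ) * (V x / x)^(2-1) * ((dv * x - V x * 1) / x^2) + 2 * κ * x⁻¹
        = (2 * W * (dv - W) + 2 * κ) / x := by
      rw [← hWdef]; field_simp; ring_nf; field_simp; ring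
    rw [hid]
    apply div_nonpos_of_nonpos_of_nonneg _ hx.1.le
    nlinarith [sq_nonneg (W - σ/2), hdvW, hκpos]
  have hGa : AntitoneOn G (Set.Ioo 0 δ) := by
    have hGdiff : DifferentiableOn ℝ G (Set.Ioo 0 δ) := by
      intro x hx
      obtain ⟨e, he, _⟩ := hGd x hx
      exact he.differentiableAt.differentiableWithinAt
    apply antitoneOn_of_deriv_nonpos (convex_Ioo _ _) hGdiff.continuousOn
    · rwa [interior_Ioo]
    · intro x hx
      rw [interior_Ioo] at hx
      obtain ⟨e, he, he0⟩ := hGd x hx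
      rw [he.deriv]; exact he0
  -- Step 3 : contradiction
  set u₀ := δ/2 with hu₀def
  have hu₀ : u₀ ∈ Set.Ioo (0:ℝ) δ := ⟨by positivity, by rw [hu₀def]; linarith⟩
  set u₁ := u₀ * Real.exp (-(σ^2+1)/(2*κ)) with hu₁def
  have hexp : Real.exp (-(σ^2+1)/(2*κ)) < 1 := by
    apply Real.exp_lt_one_iff.mpr
    apply div_neg_of_neg_of_pos _ (by positivity)
    nlinarith [sq_nonneg σ]
  have hu₁pos : 0 < u₁ := mul_pos hu₀.1 (Real.exp_pos _)
  have hu₁lt : u₁ < u₀ := by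
    rw [hu₁def]
    exact mul_lt_of_lt_one_right hu₀.1 hexp
  have hu₁ : u₁ ∈ Set.Ioo (0:ℝ) δ := ⟨hu₁pos, lt_trans hu₁lt hu₀.2⟩
  have hGle : G u₀ ≤ G u₁ := hGa hu₁ hu₀ hu₁lt.le
  have hlog : Real.log u₁ = Real.log u₀ + (-(σ^2+1)/(2*κ)) := by
    rw [hu₁def, Real.log_mul (ne_of_gt hu₀.1) (ne_of_gt (Real.exp_pos _)), Real.log_exp]
  have hexpand : 2*κ*(-(σ^2+1)/(2*κ)) = -(σ^2+1) := by
    field_simp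
  have hG0 : G u₀ = (V u₀/u₀)^2 + 2*κ*Real.log u₀ := rfl
  have hG1 : G u₁ = (V u₁/u₁)^2 + 2*κ*Real.log u₁ := rfl
  rw [hG0, hG1, hlog, mul_add, hexpand] at hGle
  have hW0 : 0 ≤ (V u₀/u₀)^2 := sq_nonneg _
  have hW1σ : V u₁ / u₁ ≤ σ := by
    rw [div_le_iff₀ hu₁pos]
    exact hVle u₁ hu₁
  have hW1pos : 0 < V u₁ / u₁ := div_pos (hVpos u₁ hu₁) hu₁pos
  have hW1sq : (V u₁/u₁)^2 ≤ σ^2 := by nlinarith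
  linarith

lemma aux_key (F : FluxData) (hc : ContinuousOn F.aplus (Set.Icc (0:ℝ) 1))
    (σ : ℝ) (hσ0 : 0 ≤ σ) (V : ℝ → ℝ) (hV : IsVsol F σ V) (hV0 : V 0 = 0)
    (da0 df0 : ℝ) (hda0 : HasDerivAt (F.a 0) da0 0)
    (hdf0 : HasDerivWithinAt F.f df0 (Set.Icc (0:ℝ) 1) 0) :
    da0 * df0 ≤ σ^2/4 := by
  obtain ⟨hVc, hV1, hVpos, hVder⟩ := hV
  by_contra hcon
  push_neg at hcon
  have h0mem : (0:ℝ) ∈ Set.Icc (0:ℝ) 1 := ⟨le_rfl, zero_le_one⟩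
  -- da0 > 0
  have hda0pos : 0 < da0 := by
    obtain ⟨d, hd, hder⟩ := F.a_deriv_pos 0 0 (aux_mem_omega_zero F h0mem)
    rwa [hda0.unique hder]
  have hprod : 0 < da0 * df0 := lt_of_le_of_lt (by positivity) hcon
  have hdf0pos : 0 < df0 := by
    by_contra h
    push_neg at h
    nlinarith
  -- choice of ε
  set ε := min (min da0 df0 / 2) ((da0 * df0 - σ^2/4) / (2 * (da0 + df0))) with hε
  have hεpos : 0 < ε := by
    apply lt_min
    · positivity
    · apply div_pos (by linarith) (by positivity)
  have hεda : ε < da0 := by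
    have h1 : ε ≤ min da0 df0 / 2 := min_le_left _ _
    have h2 : min da0 df0 ≤ da0 := min_le_left _ _
    linarith
  have hεdf : ε < df0 := by
    have h1 : ε ≤ min da0 df0 / 2 := min_le_left _ _
    have h2 : min da0 df0 ≤ df0 := min_le_right _ _
    linarith
  have hc' : σ^2/4 < (da0 - ε) * (df0 - ε) := by
    have h1 : ε ≤ (da0 * df0 - σ^2/4) / (2 * (da0 + df0)) := min_le_right _ _
    have h2 : ε * (2 * (da0 + df0)) ≤ da0 * df0 - σ^2/4 := by
      rw [← le_div_iff₀ (by positivity)]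
      exact h1
    nlinarith [sq_nonneg ε]
  obtain ⟨δa, sb, hδa0, hδa1, hsb0, hest⟩ := aux_a_est F hda0 hεpos
  -- f estimate
  have hfev : ∃ δf > 0, ∀ u, 0 < u → u < δf → u ≤ 1 → (df0 - ε) * u < F.f u := by
    have hslope := hasDerivWithinAt_iff_tendsto_slope.mp hdf0
    have hev : ∀ᶠ x in 𝓝[Set.Icc (0:ℝ) 1 \ {0}] 0, slope F.f 0 x ∈ Set.Ioi (df0 - ε) :=
      hslope (isOpen_Ioi.mem_nhds (by simp; linarith))
    rw [eventually_iff, Metric.mem_nhdsWithin_iff] at hev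
    obtain ⟨δf, hδf, hsub⟩ := hev
    refine ⟨δf, hδf, fun u hu0 huδ hu1 => ?_⟩
    have : slope F.f 0 u ∈ Set.Ioi (df0 - ε) := by
      apply hsub
      refine ⟨?_, ⟨⟨hu0.le, hu1⟩, ne_of_gt hu0⟩⟩
      rw [Metric.mem_ball, Real.dist_eq, sub_zero, abs_of_pos hu0]
      exact huδ
    rw [slope_def_field, F.f_zero, sub_zero, sub_zero, Set.mem_Ioi] at this
    exact (lt_div_iff₀ hu0).mp this
  obtain ⟨δf, hδf0, hfest⟩ := hfev
  -- branch estimate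
  have hbev : ∃ δb > 0, ∀ u, 0 < u → u < δb → u ≤ 1 →
      V u < (da0 - ε) * sb ∧ ENNReal.ofReal (V u) < F.aplus u := by
    obtain ⟨q, hq0, hq1, hq2⟩ := ENNReal.lt_iff_exists_real_btwn.mp (F.aplus_pos 0 h0mem)
    have hqpos : 0 < q := ENNReal.ofReal_pos.mp hq1
    have htendap : Filter.Tendsto F.aplus (𝓝[Set.Icc (0:ℝ) 1] 0) (𝓝 (F.aplus 0)) :=
      hc 0 h0mem
    have hev1 : ∀ᶠ u in 𝓝[Set.Icc (0:ℝ) 1] 0, F.aplus u ∈ Set.Ioi (ENNReal.ofReal q) :=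
      htendap (isOpen_Ioi.mem_nhds hq2)
    have htendV : Filter.Tendsto V (𝓝[Set.Icc (0:ℝ) 1] 0) (𝓝 0) := by
      have := hVc 0 h0mem
      rwa [ContinuousWithinAt, hV0] at this
    have hev2 : ∀ᶠ u in 𝓝[Set.Icc (0:ℝ) 1] 0, V u ∈ Set.Iio (min q ((da0 - ε) * sb)) := by
      apply htendV (isOpen_Iio.mem_nhds _)
      simp only [Set.mem_Iio]
      apply lt_min hqpos
      have : 0 < da0 - ε := by linarith
      positivity
    have hev := hev1.and hev2
    rw [eventually_iff, Metric.mem_nhdsWithin_iff] at hev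
    obtain ⟨δb, hδb, hsub⟩ := hev
    refine ⟨δb, hδb, fun u hu0 huδ hu1 => ?_⟩
    have hmem : u ∈ Metric.ball (0:ℝ) δb ∩ Set.Icc 0 1 := by
      refine ⟨?_, ⟨hu0.le, hu1⟩⟩
      rw [Metric.mem_ball, Real.dist_eq, sub_zero, abs_of_pos hu0]
      exact huδ
    obtain ⟨h1, h2⟩ := hsub hmem
    rw [Set.mem_Iio] at h2
    rw [Set.mem_Ioi] at h1
    refine ⟨lt_of_lt_of_le h2 (min_le_right _ _), ?_⟩
    calc ENNReal.ofReal (V u) < ENNReal.ofReal q := by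
          rw [ENNReal.ofReal_lt_ofReal_iff hqpos]
          exact lt_of_lt_of_le h2 (min_le_left _ _)
      _ < F.aplus u := h1
  obtain ⟨δb, hδb0, hbest⟩ := hbev
  -- combine
  set δ := min (min δa δf) (min δb 1) with hδ
  have hδ0 : 0 < δ := lt_min (lt_min hδa0 hδf0) (lt_min hδb0 one_pos)
  have hδ1 : δ ≤ 1 := (min_le_right _ _).trans (min_le_right _ _)
  have hkey : ∀ u ∈ Set.Ioo (0:ℝ) δ, ∃ dv, HasDerivAt V dv u ∧
      dv ≤ σ - ((da0 - ε) * (df0 - ε)) * u / V u ∧ dv ≤ σ := by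
    intro u hu
    have hu0 : 0 < u := hu.1
    have huδa : u < δa := lt_of_lt_of_le hu.2 ((min_le_left _ _).trans (min_le_left _ _))
    have huδf : u < δf := lt_of_lt_of_le hu.2 ((min_le_left _ _).trans (min_le_right _ _))
    have huδb : u < δb := lt_of_lt_of_le hu.2 ((min_le_right _ _).trans (min_le_left _ _))
    have hu1' : u < 1 := lt_of_lt_of_le hu.2 hδ1
    have hu01 : u ∈ Set.Ioo (0:ℝ) 1 := ⟨hu0, hu1'⟩
    have hvpos := hVpos u hu01
    obtain ⟨hvsmall, hbr⟩ := hbest u hu0 huδb hu1'.le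
    have hDmem : (u, V u) ∈ DSet F.aplus := by
      refine ⟨⟨hu0.le, hu1'.le⟩, ?_⟩
      rw [abs_of_pos hvpos]
      exact hbr
    obtain ⟨hgΩ, hga⟩ := F.g_spec (u, V u) hDmem
    set s₀ := F.g u (V u) with hs₀def
    have hs₀pos : 0 < s₀ := by
      rcases lt_trichotomy s₀ 0 with h | h | h
      · exfalso
        have := aux_a_strictMono F hgΩ (aux_mem_omega_zero F ⟨hu0.le, hu1'.le⟩) h
        rw [hga, aux_a_zero F ⟨hu0.le, hu1'.le⟩] at this
        linarith
      · exfalso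
        rw [h] at hga
        rw [aux_a_zero F ⟨hu0.le, hu1'.le⟩] at hga
        linarith
      · exact h
    have hs₀sb : s₀ ≤ sb := by
      by_contra h
      push_neg at h
      obtain ⟨hsbΩ, hsb1, _⟩ := hest u hu0 huδa sb hsb0 le_rfl
      have := aux_a_strictMono F hsbΩ hgΩ h
      rw [hga] at this
      linarith
    obtain ⟨_, hlow, _⟩ := hest u hu0 huδa s₀ hs₀pos hs₀sb
    rw [hga] at hlow
    have hder := hVder u hu01
    have hHfun : Hfun F u (V u) = 1 / s₀ := by
      rw [Hfun, if_pos hbr]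
    rw [hHfun] at hder
    have hfpos := F.f_pos u hu01
    have hflow := hfest u hu0 huδf hu1'.le
    refine ⟨_, hder, ?_, ?_⟩
    · have hinv : (da0 - ε) / V u ≤ 1 / s₀ := by
        rw [div_le_div_iff₀ hvpos hs₀pos]
        linarith
      have hda0ε : 0 < da0 - ε := by linarith
      have hdf0ε : 0 < df0 - ε := by linarith
      have hmul : ((df0 - ε) * u) * ((da0 - ε) / V u) ≤ F.f u * (1 / s₀) := by
        apply mul_le_mul hflow.le hinv (by positivity) hfpos.le
      have heq : ((da0 - ε) * (df0 - ε)) * u / V u = ((df0 - ε) * u) * ((da0 - ε) / V u) := by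
        field_simp
      rw [heq]
      linarith
    · have : 0 < F.f u * (1 / s₀) := by positivity
      linarith
  exact aux_ode σ δ ((da0 - ε) * (df0 - ε)) hσ0 hδ0 hδ1 hc' V hVc hV0
    (fun u hu => hVpos u ⟨hu.1, lt_of_lt_of_le hu.2 hδ1⟩) hkey

theorem stmt16 (F : FluxData) (hc : ContinuousOn F.aplus (Set.Icc (0:ℝ) 1))
    (𝒱 : ℝ → ℝ → ℝ) (h𝒱 : ∀ σ : ℝ, 0 ≤ σ → IsVsol F σ (𝒱 σ))
    (σs : ℝ) (hσs : σs = sInf {σ : ℝ | 0 ≤ σ ∧ 𝒱 σ 0 = 0})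
    (hne : {σ : ℝ | 0 ≤ σ ∧ 𝒱 σ 0 = 0}.Nonempty)
    (da0 df0 : ℝ) (hda0 : HasDerivAt (F.a 0) da0 0)
    (hdf0 : HasDerivWithinAt F.f df0 (Set.Icc (0:ℝ) 1) 0) :
    2 * Real.sqrt (da0 * df0) ≤ σs := by
  rw [hσs]
  apply le_csInf hne
  rintro σ ⟨hσ0, hσV0⟩
  have hkey := aux_key F hc σ hσ0 (𝒱 σ) (h𝒱 σ hσ0) hσV0 da0 df0 hda0 hdf0
  have h1 : Real.sqrt (da0 * df0) ≤ Real.sqrt (σ^2/4) := Real.sqrt_le_sqrt hkey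
  have h2 : Real.sqrt (σ^2/4) = σ/2 := by
    have : σ^2/4 = (σ/2)^2 := by ring
    rw [this, Real.sqrt_sq (by linarith)]
  rw [h2] at h1
  linarith
end
end

section
/- Let δ > 0 and let γ : [0,δ]² → (0,∞) be continuous and Lipschitz in its second variable, i.e., there is L > 0 with |γ(u,V₂) − γ(u,V₁)| ≤ L·|V₂ − V₁| for all u, V₁, V₂ ∈ [0,δ]. Set γ₀ := γ(0,0) and let σ > 2√γ₀. Then there exist ε ∈ (0,δ] and a continuous function V : [0,ε) → [0,δ] with V(0) = 0, V(u) > 0 for u ∈ (0,ε), V differentiable on (0,ε) with V'(u) = σ − (u/V(u))·γ(u,V(u)), and lim_{u→0⁺} V(u)/u = (σ + √(σ² − 4γ₀))/2. Moreover this solution is unique: any two functions with all these properties coincide on a common interval [0,ε') to the right of 0. -/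
open Set Filter Topology
open scoped ENNReal

noncomputable section

/-- Lipschitz estimate for `w ↦ γ t (t*w) / w` on the ball `[lp-r, lp+r]`. -/
lemma sing_glip (γ : ℝ → ℝ → ℝ) (δ L lp r k' η ε : ℝ)
    (hγ00 : 0 ≤ γ 0 0)
    (hlip : ∀ u ∈ Set.Icc (0:ℝ) δ, ∀ V₁ ∈ Set.Icc (0:ℝ) δ, ∀ V₂ ∈ Set.Icc (0:ℝ) δ,
      |γ u V₂ - γ u V₁| ≤ L * |V₂ - V₁|)
    (hγnear : ∀ s ∈ Set.Icc (0:ℝ) ε, ∀ v ∈ Set.Icc (0:ℝ) (ε*(lp+r)), |γ s v - γ 0 0| ≤ η)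
    (hη : 0 ≤ η) (hr : 0 < r) (hrlp : r < lp) (hL : 0 < L)
    (hε : 0 < ε) (hεδ : ε ≤ δ) (hεΛδ : ε*(lp+r) ≤ δ)
    (hk : L*ε/(lp-r) + (γ 0 0 + η)/(lp-r)^2 ≤ k') :
    ∀ t ∈ Set.Icc (0:ℝ) ε, ∀ w₁ ∈ Set.Icc (lp-r) (lp+r), ∀ w₂ ∈ Set.Icc (lp-r) (lp+r),
      |γ t (t*w₁)/w₁ - γ t (t*w₂)/w₂| ≤ k' * |w₁ - w₂| := by
  intro t ht w₁ hw₁ w₂ hw₂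
  have hA : 0 < lp - r := by linarith
  have hw₁p : 0 < w₁ := lt_of_lt_of_le hA hw₁.1
  have hw₂p : 0 < w₂ := lt_of_lt_of_le hA hw₂.1
  have htδ : t ∈ Set.Icc (0:ℝ) δ := ⟨ht.1, ht.2.trans hεδ⟩
  have htw : ∀ w ∈ Set.Icc (lp-r) (lp+r), t*w ∈ Set.Icc (0:ℝ) δ := by
    intro w hw
    have hwp : 0 < w := lt_of_lt_of_le hA hw.1
    exact ⟨mul_nonneg ht.1 hwp.le,
      (mul_le_mul ht.2 hw.2 hwp.le hε.le).trans hεΛδ⟩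
  have hγ2bd : |γ t (t*w₂)| ≤ γ 0 0 + η := by
    have h1 := hγnear t ht (t*w₂) ⟨mul_nonneg ht.1 hw₂p.le,
      mul_le_mul ht.2 hw₂.2 hw₂p.le hε.le⟩
    have h2 := abs_le.1 h1
    rw [abs_le]; constructor <;> linarith [h2.1, h2.2]
  have key : γ t (t*w₁)/w₁ - γ t (t*w₂)/w₂
      = (γ t (t*w₁) - γ t (t*w₂))/w₁ + γ t (t*w₂)*(w₂-w₁)/(w₁*w₂) := by
    field_simp
    ring
  rw [key]
  have e1 : |(γ t (t*w₁) - γ t (t*w₂))/w₁| ≤ (L*ε/(lp-r)) * |w₁ - w₂| := by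
    rw [abs_div, abs_of_pos hw₁p]
    have hnum : |γ t (t*w₁) - γ t (t*w₂)| ≤ L * (t * |w₁ - w₂|) := by
      have := hlip t htδ (t*w₂) (htw w₂ hw₂) (t*w₁) (htw w₁ hw₁)
      have he : |t*w₁ - t*w₂| = t * |w₁ - w₂| := by
        rw [← mul_sub, abs_mul, abs_of_nonneg ht.1]
      rw [he] at this; exact this
    calc |γ t (t*w₁) - γ t (t*w₂)| / w₁ ≤ (L * (ε * |w₁ - w₂|)) / (lp - r) := by
          apply div_le_div₀ (by positivity) _ hA hw₁.1
          exact hnum.trans (by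
            have : t * |w₁ - w₂| ≤ ε * |w₁ - w₂| :=
              mul_le_mul_of_nonneg_right ht.2 (abs_nonneg _)
            nlinarith [abs_nonneg (w₁ - w₂)])
      _ = (L*ε/(lp-r)) * |w₁ - w₂| := by ring
  have e2 : |γ t (t*w₂)*(w₂-w₁)/(w₁*w₂)| ≤ ((γ 0 0 + η)/(lp-r)^2) * |w₁ - w₂| := by
    rw [abs_div, abs_mul, abs_of_pos (mul_pos hw₁p hw₂p), abs_sub_comm w₂ w₁]
    calc |γ t (t*w₂)| * |w₁ - w₂| / (w₁ * w₂)
        ≤ ((γ 0 0 + η) * |w₁ - w₂|) / ((lp-r)^2) := by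
          apply div_le_div₀ (by positivity)
            (mul_le_mul_of_nonneg_right hγ2bd (abs_nonneg _)) (by positivity)
          nlinarith [hw₁.1, hw₂.1]
      _ = ((γ 0 0 + η)/(lp-r)^2) * |w₁ - w₂| := by ring
  calc |(γ t (t*w₁) - γ t (t*w₂))/w₁ + γ t (t*w₂)*(w₂-w₁)/(w₁*w₂)|
      ≤ |(γ t (t*w₁) - γ t (t*w₂))/w₁| + |γ t (t*w₂)*(w₂-w₁)/(w₁*w₂)| := abs_add_le _ _
    _ ≤ (L*ε/(lp-r)) * |w₁ - w₂| + ((γ 0 0 + η)/(lp-r)^2) * |w₁ - w₂| := by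
        exact add_le_add e1 e2
    _ = (L*ε/(lp-r) + (γ 0 0 + η)/(lp-r)^2) * |w₁ - w₂| := by ring
    _ ≤ k' * |w₁ - w₂| := mul_le_mul_of_nonneg_right hk (abs_nonneg _)

lemma sing_gsmall (γ : ℝ → ℝ → ℝ) (δ L lp r k' η ε σ : ℝ)
    (hγ00 : 0 ≤ γ 0 0)
    (hlip : ∀ u ∈ Set.Icc (0:ℝ) δ, ∀ V₁ ∈ Set.Icc (0:ℝ) δ, ∀ V₂ ∈ Set.Icc (0:ℝ) δ,
      |γ u V₂ - γ u V₁| ≤ L * |V₂ - V₁|)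
    (hγnear : ∀ s ∈ Set.Icc (0:ℝ) ε, ∀ v ∈ Set.Icc (0:ℝ) (ε*(lp+r)), |γ s v - γ 0 0| ≤ η)
    (hη : 0 ≤ η) (hr : 0 < r) (hrlp : r < lp) (hL : 0 < L)
    (hε : 0 < ε) (hεδ : ε ≤ δ) (hεΛδ : ε*(lp+r) ≤ δ)
    (hk : L*ε/(lp-r) + (γ 0 0 + η)/(lp-r)^2 ≤ k')
    (hσlp : σ - lp = γ 0 0 / lp)
    (hη2 : η ≤ lp*r*(1-k')) (hk'0 : 0 ≤ k') (hk'1 : k' ≤ 1) :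
    ∀ t ∈ Set.Icc (0:ℝ) ε, ∀ w ∈ Set.Icc (lp-r) (lp+r),
      |σ - lp - γ t (t*w)/w| ≤ r := by
  intro t ht w hw
  have hlp : 0 < lp := by linarith
  have hlpmem : lp ∈ Set.Icc (lp-r) (lp+r) := ⟨by linarith, by linarith⟩
  have e1 : |γ 0 0 / lp - γ t (t*lp)/lp| ≤ η / lp := by
    rw [div_sub_div_same, abs_div, abs_of_pos hlp]
    apply div_le_div_of_nonneg_right (c := lp) ?_ hlp.le
    · have := hγnear t ht (t*lp) ⟨mul_nonneg ht.1 hlp.le, by nlinarith [ht.2]⟩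
      calc |γ 0 0 - γ t (t*lp)| = |γ t (t*lp) - γ 0 0| := abs_sub_comm _ _
        _ ≤ η := this
  have e2 : |γ t (t*lp)/lp - γ t (t*w)/w| ≤ k' * |lp - w| :=
    sing_glip γ δ L lp r k' η ε hγ00 hlip hγnear hη hr hrlp hL hε hεδ hεΛδ hk
      t ht lp hlpmem w hw
  have hlw : |lp - w| ≤ r := by
    rw [abs_le]; constructor <;> [linarith [hw.2]; linarith [hw.1]]
  have hηlp : η / lp ≤ r * (1 - k') := by
    rw [div_le_iff₀ hlp]; nlinarith
  calc |σ - lp - γ t (t*w)/w|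
      = |(γ 0 0/lp - γ t (t*lp)/lp) + (γ t (t*lp)/lp - γ t (t*w)/w)| := by
        rw [hσlp]; ring_nf
    _ ≤ |γ 0 0/lp - γ t (t*lp)/lp| + |γ t (t*lp)/lp - γ t (t*w)/w| := abs_add_le _ _
    _ ≤ η / lp + k' * |lp - w| := add_le_add e1 e2
    _ ≤ r * (1 - k') + k' * r := add_le_add hηlp (mul_le_mul_of_nonneg_left hlw hk'0)
    _ = r := by ring

set_option maxHeartbeats 1000000

lemma sing_params (δ : ℝ) (hδ : 0 < δ) (γ : ℝ → ℝ → ℝ)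
    (hγc : ContinuousOn (fun p : ℝ × ℝ => γ p.1 p.2) (Set.Icc 0 δ ×ˢ Set.Icc 0 δ))
    (hγpos : ∀ u ∈ Set.Icc (0:ℝ) δ, ∀ v ∈ Set.Icc (0:ℝ) δ, 0 < γ u v)
    (L : ℝ) (hL : 0 < L)
    (σ : ℝ) (hσ : 2 * Real.sqrt (γ 0 0) < σ) :
    ∃ lp lm r k' η ε : ℝ,
      0 < lm ∧ lm < lp ∧ lp + lm = σ ∧ lp * lm = γ 0 0 ∧
      lp = (σ + Real.sqrt (σ^2 - 4*γ 0 0))/2 ∧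
      0 < r ∧ r < lp ∧ 0 ≤ k' ∧ k' < 1 ∧ 0 < η ∧ 0 < ε ∧ ε ≤ δ ∧ ε*(lp+r) ≤ δ ∧
      (L*ε/(lp-r) + (γ 0 0 + η)/(lp-r)^2 ≤ k') ∧ η ≤ lp*r*(1-k') ∧
      (∀ s ∈ Set.Icc (0:ℝ) ε, ∀ v ∈ Set.Icc (0:ℝ) (ε*(lp+r)), |γ s v - γ 0 0| ≤ η) := by
  have h0δ : (0:ℝ) ∈ Set.Icc (0:ℝ) δ := ⟨le_rfl, hδ.le⟩
  obtain ⟨g0, hg0def, hg0⟩ : ∃ g0, g0 = γ 0 0 ∧ 0 < g0 := ⟨_, rfl, hγpos 0 h0δ 0 h0δ⟩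
  rw [← hg0def] at hσ ⊢
  have hσ0 : 0 < σ := lt_of_le_of_lt (by positivity) hσ
  have hdisc : 0 < σ^2 - 4*g0 := by
    nlinarith [Real.sq_sqrt hg0.le, Real.sqrt_nonneg g0]
  obtain ⟨S, hSdef, hS0, hS2⟩ : ∃ S, S = Real.sqrt (σ^2 - 4*g0) ∧ 0 < S ∧ S^2 = σ^2 - 4*g0 :=
    ⟨_, rfl, Real.sqrt_pos.2 hdisc, Real.sq_sqrt hdisc.le⟩
  have hSσ : S < σ := by nlinarith
  obtain ⟨lp, lm, hlpdef, hlmdef⟩ : ∃ lp lm : ℝ, lp = (σ+S)/2 ∧ lm = (σ-S)/2 :=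
    ⟨_, _, rfl, rfl⟩
  have hlm0 : 0 < lm := by rw [hlmdef]; linarith
  have hlp0 : 0 < lp := by rw [hlpdef]; linarith
  have hlmlp : lm < lp := by rw [hlmdef, hlpdef]; linarith
  have hsum : lp + lm = σ := by rw [hlmdef, hlpdef]; ring
  have hprod : lp * lm = g0 := by rw [hlmdef, hlpdef]; nlinarith
  obtain ⟨k0, hk0def⟩ : ∃ k0 : ℝ, k0 = lm/lp := ⟨_, rfl⟩
  have hk00 : 0 < k0 := hk0def ▸ div_pos hlm0 hlp0
  have hk01 : k0 < 1 := hk0def ▸ (div_lt_one hlp0).2 hlmlp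
  obtain ⟨d, hddef⟩ : ∃ d : ℝ, d = (1-k0)/6 := ⟨_, rfl⟩
  have hd : 0 < d := by rw [hddef]; linarith
  obtain ⟨k', hk'def⟩ : ∃ k' : ℝ, k' = k0 + 3*d := ⟨_, rfl⟩
  have hk'0 : 0 ≤ k' := by rw [hk'def]; positivity
  have hk'1 : k' < 1 := by rw [hk'def, hddef]; linarith
  have hk0g : k0 * lp^2 = g0 := by
    rw [hk0def]; field_simp; linear_combination hprod
  obtain ⟨r, hr0, hr1, hr2⟩ : ∃ r : ℝ, 0 < r ∧ r ≤ lp/2 ∧ r*(8*g0) ≤ d*lp^3 := by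
    refine ⟨min (lp/2) (d*lp^3/(8*g0)), lt_min (half_pos hlp0)
      (div_pos (mul_pos hd (pow_pos hlp0 3)) (by linarith)), min_le_left _ _, ?_⟩
    rw [← le_div_iff₀ (by linarith : (0:ℝ) < 8*g0)]
    exact min_le_right _ _
  have hrlp : r < lp := hr1.trans_lt (by linarith)
  have hA0 : 0 < lp - r := by linarith
  have hA : lp/2 ≤ lp - r := by linarith
  have hrd : g0/(lp-r)^2 ≤ k0 + d := by
    rw [div_le_iff₀ (pow_pos hA0 2)]
    have e1 : 8*r*k0*lp^2 ≤ d*lp^3 := by nlinarith [hr2, hk0g]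
    have e2 : 8*(r*(k0*lp)) ≤ d*lp^2 := by
      apply le_of_mul_le_mul_left _ hlp0
      calc lp*(8*(r*(k0*lp))) = 8*r*k0*lp^2 := by ring
        _ ≤ d*lp^3 := e1
        _ = lp*(d*lp^2) := by ring
    have e3 : lp^2/4 ≤ (lp-r)^2 := by
      have := pow_le_pow_left₀ (by linarith : (0:ℝ) ≤ lp/2) hA 2
      calc lp^2/4 = (lp/2)^2 := by ring
        _ ≤ (lp-r)^2 := this
    have e4 : d*lp^2/4 ≤ d*(lp-r)^2 := by
      have := mul_le_mul_of_nonneg_left e3 hd.le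
      calc d*lp^2/4 = d*(lp^2/4) := by ring
        _ ≤ d*(lp-r)^2 := this
    nlinarith [hk0g, e2, e4, mul_nonneg hk00.le (sq_nonneg r)]
  obtain ⟨η, hη0, hη1, hη2⟩ : ∃ η : ℝ, 0 < η ∧ η ≤ d*(lp-r)^2 ∧ η ≤ lp*r*(1-k') :=
    ⟨min (d*(lp-r)^2) (lp*r*(1-k')),
      lt_min (mul_pos hd (pow_pos hA0 2)) (mul_pos (mul_pos hlp0 hr0) (by linarith)),
      min_le_left _ _, min_le_right _ _⟩
  have hcw : ContinuousWithinAt (fun p : ℝ × ℝ => γ p.1 p.2)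
      (Set.Icc 0 δ ×ˢ Set.Icc 0 δ) (0,0) := hγc (0,0) ⟨h0δ, h0δ⟩
  obtain ⟨ρ, hρ0, hρ⟩ := Metric.continuousWithinAt_iff.1 hcw η hη0
  have hΛ0 : 0 < lp + r := by linarith
  obtain ⟨ε, hε0, hεδ, hεa, hεb, hεc, hεd⟩ :
      ∃ ε : ℝ, 0 < ε ∧ ε ≤ δ ∧ ε ≤ δ/(lp+r) ∧ ε ≤ d*(lp-r)/L ∧ ε ≤ ρ/2 ∧ ε ≤ ρ/(2*(lp+r)) := by
    refine ⟨min (min δ (δ/(lp+r))) (min (d*(lp-r)/L) (min (ρ/2) (ρ/(2*(lp+r))))),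
      lt_min (lt_min hδ (div_pos hδ hΛ0)) (lt_min (div_pos (mul_pos hd hA0) hL)
        (lt_min (half_pos hρ0) (div_pos hρ0 (by linarith)))), ?_, ?_, ?_, ?_, ?_⟩
    · exact le_trans (min_le_left _ _) (min_le_left _ _)
    · exact le_trans (min_le_left _ _) (min_le_right _ _)
    · exact le_trans (min_le_right _ _) (min_le_left _ _)
    · exact le_trans (min_le_right _ _) (le_trans (min_le_right _ _) (min_le_left _ _))
    · exact le_trans (min_le_right _ _) (le_trans (min_le_right _ _) (min_le_right _ _))
  have hεΛδ : ε*(lp+r) ≤ δ := by rw [← le_div_iff₀ hΛ0]; exact hεa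
  have hεΛρ : ε*(lp+r) ≤ ρ/2 := by
    calc ε*(lp+r) ≤ ρ/(2*(lp+r))*(lp+r) := mul_le_mul_of_nonneg_right hεd hΛ0.le
      _ = ρ/2 := by field_simp
  have hγnear : ∀ s ∈ Set.Icc (0:ℝ) ε, ∀ v ∈ Set.Icc (0:ℝ) (ε*(lp+r)), |γ s v - g0| ≤ η := by
    intro s hs v hv
    have hmem : (s, v) ∈ Set.Icc (0:ℝ) δ ×ˢ Set.Icc (0:ℝ) δ :=
      ⟨⟨hs.1, hs.2.trans hεδ⟩, ⟨hv.1, hv.2.trans hεΛδ⟩⟩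
    have hdist : dist (s, v) ((0:ℝ), (0:ℝ)) < ρ := by
      rw [Prod.dist_eq]
      apply max_lt <;> rw [Real.dist_eq, sub_zero, abs_of_nonneg]
      · linarith [hs.2, hεc]
      · exact hs.1
      · linarith [hv.2, hεΛρ]
      · exact hv.1
    have h5 := hρ hmem hdist
    rw [Real.dist_eq, ← hg0def] at h5
    exact h5.le
  have hkfinal : L*ε/(lp-r) + (g0 + η)/(lp-r)^2 ≤ k' := by
    have h1 : L*ε/(lp-r) ≤ d := by
      rw [div_le_iff₀ hA0]
      have := (le_div_iff₀ hL).1 hεb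
      linarith [this]
    have h2 : η/(lp-r)^2 ≤ d := by
      rw [div_le_iff₀ (pow_pos hA0 2)]
      exact hη1
    have h3 : (g0 + η)/(lp-r)^2 = g0/(lp-r)^2 + η/(lp-r)^2 := by ring
    rw [h3, hk'def]
    linarith [hrd, h1, h2]
  refine ⟨lp, lm, r, k', η, ε, hlm0, hlmlp, hsum, hprod, ?_, hr0, hrlp, hk'0, hk'1,
    hη0, hε0, hεδ, hεΛδ, hkfinal, hη2, hγnear⟩
  rw [hlpdef, hSdef]

/-- Extension of a continuous map on `[0,ε]` to `ℝ` by clamping. -/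
def singExt (ε : ℝ) (hε : (0:ℝ) ≤ ε) (W : C(Set.Icc (0:ℝ) ε, ℝ)) : ℝ → ℝ :=
  fun t => W (Set.projIcc 0 ε hε t)

/-- The transformed right-hand side `t ↦ σ - lp - γ t (t W t) / W t` (clamped). -/
def singH (γ : ℝ → ℝ → ℝ) (σ lp ε : ℝ) (hε : (0:ℝ) ≤ ε) (W : C(Set.Icc (0:ℝ) ε, ℝ)) :
    ℝ → ℝ :=
  fun t => σ - lp - γ ((Set.projIcc 0 ε hε t : ℝ))
    (((Set.projIcc 0 ε hε t : ℝ)) * singExt ε hε W t) / singExt ε hε W t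

/-- Primitive of `singH` from `0`. -/
def singPhi (γ : ℝ → ℝ → ℝ) (σ lp ε : ℝ) (hε : (0:ℝ) ≤ ε) (W : C(Set.Icc (0:ℝ) ε, ℝ)) :
    ℝ → ℝ :=
  fun u => ∫ t in (0:ℝ)..u, singH γ σ lp ε hε W t

lemma singExt_cont (ε : ℝ) (hε : (0:ℝ) ≤ ε) (W : C(Set.Icc (0:ℝ) ε, ℝ)) :
    Continuous (singExt ε hε W) :=
  W.continuous.comp continuous_projIcc

lemma singExt_eq (ε : ℝ) (hε : (0:ℝ) ≤ ε) (W : C(Set.Icc (0:ℝ) ε, ℝ)) {t : ℝ}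
    (ht : t ∈ Set.Icc (0:ℝ) ε) : singExt ε hε W t = W ⟨t, ht⟩ := by
  unfold singExt; rw [Set.projIcc_of_mem hε ht]

lemma singH_eq (γ : ℝ → ℝ → ℝ) (σ lp ε : ℝ) (hε : (0:ℝ) ≤ ε) (W : C(Set.Icc (0:ℝ) ε, ℝ))
    {t : ℝ} (ht : t ∈ Set.Icc (0:ℝ) ε) :
    singH γ σ lp ε hε W t = σ - lp - γ t (t * W ⟨t, ht⟩) / W ⟨t, ht⟩ := by
  unfold singH
  rw [singExt_eq ε hε W ht, Set.projIcc_of_mem hε ht]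

lemma singH_cont (γ : ℝ → ℝ → ℝ) (σ lp δ ε r : ℝ)
    (hγc : ContinuousOn (fun p : ℝ × ℝ => γ p.1 p.2) (Set.Icc 0 δ ×ˢ Set.Icc 0 δ))
    (hε : (0:ℝ) ≤ ε) (hεδ : ε ≤ δ) (hΛδ : ε*(lp+r) ≤ δ) (hA0 : 0 < lp - r)
    (W : C(Set.Icc (0:ℝ) ε, ℝ)) (hW : ∀ t, W t ∈ Set.Icc (lp-r) (lp+r)) :
    Continuous (singH γ σ lp ε hε W) := by
  have hc : Continuous fun t => ((Set.projIcc (0:ℝ) ε hε t : ℝ)) :=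
    continuous_subtype_val.comp continuous_projIcc
  have hWc := singExt_cont ε hε W
  have hWmem : ∀ t, singExt ε hε W t ∈ Set.Icc (lp-r) (lp+r) := fun t => hW _
  have hWpos : ∀ t, 0 < singExt ε hε W t := fun t => hA0.trans_le (hWmem t).1
  have hγcomp : Continuous fun t => γ ((Set.projIcc (0:ℝ) ε hε t : ℝ))
      (((Set.projIcc (0:ℝ) ε hε t : ℝ)) * singExt ε hε W t) := by
    have := hγc.comp_continuous (f := fun t =>
        (((Set.projIcc (0:ℝ) ε hε t : ℝ)), ((Set.projIcc (0:ℝ) ε hε t : ℝ)) * singExt ε hε W t))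
      (by fun_prop) ?_
    · exact this
    · intro t
      have hm := (Set.projIcc (0:ℝ) ε hε t).2
      have h1 : (0:ℝ) ≤ (Set.projIcc (0:ℝ) ε hε t : ℝ) := hm.1
      have h2 : (Set.projIcc (0:ℝ) ε hε t : ℝ) ≤ ε := hm.2
      refine ⟨⟨h1, h2.trans hεδ⟩, ⟨mul_nonneg h1 (hWpos t).le, ?_⟩⟩
      calc (Set.projIcc (0:ℝ) ε hε t : ℝ) * singExt ε hε W t
          ≤ ε * (lp+r) := mul_le_mul h2 (hWmem t).2 (hWpos t).le hε
        _ ≤ δ := hΛδ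
  exact (continuous_const.sub (hγcomp.div hWc (fun t => (hWpos t).ne')))

lemma singPhi_deriv (γ : ℝ → ℝ → ℝ) (σ lp δ ε r : ℝ)
    (hγc : ContinuousOn (fun p : ℝ × ℝ => γ p.1 p.2) (Set.Icc 0 δ ×ˢ Set.Icc 0 δ))
    (hε : (0:ℝ) ≤ ε) (hεδ : ε ≤ δ) (hΛδ : ε*(lp+r) ≤ δ) (hA0 : 0 < lp - r)
    (W : C(Set.Icc (0:ℝ) ε, ℝ)) (hW : ∀ t, W t ∈ Set.Icc (lp-r) (lp+r)) (u : ℝ) :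
    HasDerivAt (singPhi γ σ lp ε hε W) (singH γ σ lp ε hε W u) u := by
  have hc := singH_cont γ σ lp δ ε r hγc hε hεδ hΛδ hA0 W hW
  exact intervalIntegral.integral_hasDerivAt_right (hc.intervalIntegrable _ _)
    (hc.stronglyMeasurableAtFilter _ _) hc.continuousAt

lemma singPhi_cont (γ : ℝ → ℝ → ℝ) (σ lp δ ε r : ℝ)
    (hγc : ContinuousOn (fun p : ℝ × ℝ => γ p.1 p.2) (Set.Icc 0 δ ×ˢ Set.Icc 0 δ))
    (hε : (0:ℝ) ≤ ε) (hεδ : ε ≤ δ) (hΛδ : ε*(lp+r) ≤ δ) (hA0 : 0 < lp - r)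
    (W : C(Set.Icc (0:ℝ) ε, ℝ)) (hW : ∀ t, W t ∈ Set.Icc (lp-r) (lp+r)) :
    Continuous (singPhi γ σ lp ε hε W) := by
  have hc := singH_cont γ σ lp δ ε r hγc hε hεδ hΛδ hA0 W hW
  exact intervalIntegral.continuous_primitive (fun a b => hc.intervalIntegrable a b) 0

lemma singPhi_zero (γ : ℝ → ℝ → ℝ) (σ lp ε : ℝ) (hε : (0:ℝ) ≤ ε)
    (W : C(Set.Icc (0:ℝ) ε, ℝ)) : singPhi γ σ lp ε hε W 0 = 0 :=
  intervalIntegral.integral_same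

/-- The Picard-type operator for the singular problem. -/
def singT (γ : ℝ → ℝ → ℝ) (σ lp ε : ℝ) (hε : (0:ℝ) ≤ ε) (W : C(Set.Icc (0:ℝ) ε, ℝ)) :
    ℝ → ℝ :=
  fun u => lp + singPhi γ σ lp ε hε W u / u

lemma singH_zero (γ : ℝ → ℝ → ℝ) (σ lp ε : ℝ) (hε0 : (0:ℝ) < ε)
    (W : C(Set.Icc (0:ℝ) ε, ℝ)) (hW0 : W ⟨0, ⟨le_rfl, hε0.le⟩⟩ = lp)
    (hσlp : σ - lp = γ 0 0 / lp) :
    singH γ σ lp ε hε0.le W 0 = 0 := by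
  rw [singH_eq γ σ lp ε hε0.le W ⟨le_rfl, hε0.le⟩, hW0, zero_mul]
  rw [sub_sub, ← hσlp]; ring

lemma singPhi_slope (γ : ℝ → ℝ → ℝ) (σ lp δ ε r : ℝ)
    (hγc : ContinuousOn (fun p : ℝ × ℝ => γ p.1 p.2) (Set.Icc 0 δ ×ˢ Set.Icc 0 δ))
    (hε0 : (0:ℝ) < ε) (hεδ : ε ≤ δ) (hΛδ : ε*(lp+r) ≤ δ) (hA0 : 0 < lp - r)
    (W : C(Set.Icc (0:ℝ) ε, ℝ)) (hW : ∀ t, W t ∈ Set.Icc (lp-r) (lp+r))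
    (hW0 : W ⟨0, ⟨le_rfl, hε0.le⟩⟩ = lp) (hσlp : σ - lp = γ 0 0 / lp) :
    Tendsto (fun u => singPhi γ σ lp ε hε0.le W u / u) (𝓝[≠] (0:ℝ)) (𝓝 0) := by
  have hd := singPhi_deriv γ σ lp δ ε r hγc hε0.le hεδ hΛδ hA0 W hW 0
  rw [singH_zero γ σ lp ε hε0 W hW0 hσlp] at hd
  rw [hasDerivAt_iff_tendsto_slope] at hd
  have : (slope (singPhi γ σ lp ε hε0.le W) 0) = fun u => singPhi γ σ lp ε hε0.le W u / u := by
    funext u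
    rw [slope_def_field, singPhi_zero, sub_zero, sub_zero]
  rwa [this] at hd

lemma singT_cont (γ : ℝ → ℝ → ℝ) (σ lp δ ε r : ℝ)
    (hγc : ContinuousOn (fun p : ℝ × ℝ => γ p.1 p.2) (Set.Icc 0 δ ×ˢ Set.Icc 0 δ))
    (hε0 : (0:ℝ) < ε) (hεδ : ε ≤ δ) (hΛδ : ε*(lp+r) ≤ δ) (hA0 : 0 < lp - r)
    (W : C(Set.Icc (0:ℝ) ε, ℝ)) (hW : ∀ t, W t ∈ Set.Icc (lp-r) (lp+r))
    (hW0 : W ⟨0, ⟨le_rfl, hε0.le⟩⟩ = lp) (hσlp : σ - lp = γ 0 0 / lp) :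
    Continuous (singT γ σ lp ε hε0.le W) := by
  have hphic := singPhi_cont γ σ lp δ ε r hγc hε0.le hεδ hΛδ hA0 W hW
  rw [continuous_iff_continuousAt]
  intro u
  rcases eq_or_ne u 0 with rfl | hu
  · unfold ContinuousAt
    have h0 : singT γ σ lp ε hε0.le W 0 = lp := by
      unfold singT; rw [singPhi_zero, zero_div, add_zero]
    rw [h0, ← nhdsNE_sup_pure (0:ℝ)]
    rw [tendsto_sup]
    constructor
    · have := (singPhi_slope γ σ lp δ ε r hγc hε0 hεδ hΛδ hA0 W hW hW0 hσlp).const_add lp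
      rw [add_zero] at this; exact this
    · have : Tendsto (singT γ σ lp ε hε0.le W) (pure 0) (𝓝 (singT γ σ lp ε hε0.le W 0)) :=
        tendsto_pure_nhds _ _
      rwa [h0] at this
  · exact (continuousAt_const.add ((hphic.continuousAt).div continuousAt_id hu))

lemma singT_zero (γ : ℝ → ℝ → ℝ) (σ lp ε : ℝ) (hε : (0:ℝ) ≤ ε)
    (W : C(Set.Icc (0:ℝ) ε, ℝ)) : singT γ σ lp ε hε W 0 = lp := by
  unfold singT; rw [singPhi_zero, zero_div, add_zero]

lemma singT_mem (γ : ℝ → ℝ → ℝ) (σ lp ε r : ℝ) (hε0 : (0:ℝ) < ε) (hr0 : 0 < r)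
    (W : C(Set.Icc (0:ℝ) ε, ℝ)) (hW : ∀ t, W t ∈ Set.Icc (lp-r) (lp+r))
    (hsmall : ∀ t ∈ Set.Icc (0:ℝ) ε, ∀ w ∈ Set.Icc (lp-r) (lp+r),
      |σ - lp - γ t (t*w)/w| ≤ r)
    {u : ℝ} (hu : u ∈ Set.Icc (0:ℝ) ε) :
    singT γ σ lp ε hε0.le W u ∈ Set.Icc (lp-r) (lp+r) := by
  rcases eq_or_lt_of_le hu.1 with rfl | hu0
  · rw [singT_zero]
    exact ⟨by linarith, by linarith⟩
  · have hb : |singPhi γ σ lp ε hε0.le W u| ≤ r * |u - 0| := by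
      rw [← Real.norm_eq_abs]
      unfold singPhi
      apply intervalIntegral.norm_integral_le_of_norm_le_const
      intro t ht
      rw [uIoc_of_le hu0.le] at ht
      have htI : t ∈ Set.Icc (0:ℝ) ε := ⟨ht.1.le, ht.2.trans hu.2⟩
      rw [Real.norm_eq_abs, singH_eq γ σ lp ε hε0.le W htI]
      exact hsmall t htI _ (hW _)
    rw [sub_zero, abs_of_pos hu0] at hb
    have : |singPhi γ σ lp ε hε0.le W u / u| ≤ r := by
      rw [abs_div, abs_of_pos hu0, div_le_iff₀ hu0]
      exact hb
    have h2 := abs_le.1 this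
    unfold singT
    constructor <;> [linarith [h2.1]; linarith [h2.2]]

lemma singT_dist (γ : ℝ → ℝ → ℝ) (σ lp ε r k' C : ℝ) (hε0 : (0:ℝ) < ε)
    (hC : 0 ≤ C) (hk'0 : 0 ≤ k')
    (W₁ W₂ : C(Set.Icc (0:ℝ) ε, ℝ))
    (hW₁ : ∀ t, W₁ t ∈ Set.Icc (lp-r) (lp+r)) (hW₂ : ∀ t, W₂ t ∈ Set.Icc (lp-r) (lp+r))
    (hWd : ∀ t, |W₁ t - W₂ t| ≤ C)
    (hglip : ∀ t ∈ Set.Icc (0:ℝ) ε, ∀ w₁ ∈ Set.Icc (lp-r) (lp+r), ∀ w₂ ∈ Set.Icc (lp-r) (lp+r),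
      |γ t (t*w₁)/w₁ - γ t (t*w₂)/w₂| ≤ k' * |w₁ - w₂|)
    (hHc₁ : Continuous (singH γ σ lp ε hε0.le W₁))
    (hHc₂ : Continuous (singH γ σ lp ε hε0.le W₂))
    {u : ℝ} (hu : u ∈ Set.Icc (0:ℝ) ε) :
    |singT γ σ lp ε hε0.le W₁ u - singT γ σ lp ε hε0.le W₂ u| ≤ k' * C := by
  rcases eq_or_lt_of_le hu.1 with rfl | hu0
  · rw [singT_zero, singT_zero, sub_self, abs_zero]
    positivity
  · have hb : |singPhi γ σ lp ε hε0.le W₁ u - singPhi γ σ lp ε hε0.le W₂ u|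
        ≤ (k' * C) * |u - 0| := by
      unfold singPhi
      rw [← intervalIntegral.integral_sub (hHc₁.intervalIntegrable _ _)
        (hHc₂.intervalIntegrable _ _)]
      rw [← Real.norm_eq_abs]
      apply intervalIntegral.norm_integral_le_of_norm_le_const
      intro t ht
      rw [uIoc_of_le hu0.le] at ht
      have htI : t ∈ Set.Icc (0:ℝ) ε := ⟨ht.1.le, ht.2.trans hu.2⟩
      rw [Real.norm_eq_abs, singH_eq γ σ lp ε hε0.le W₁ htI, singH_eq γ σ lp ε hε0.le W₂ htI]
      have e : (σ - lp - γ t (t * W₁ ⟨t, htI⟩) / W₁ ⟨t, htI⟩)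
          - (σ - lp - γ t (t * W₂ ⟨t, htI⟩) / W₂ ⟨t, htI⟩)
          = γ t (t * W₂ ⟨t, htI⟩) / W₂ ⟨t, htI⟩ - γ t (t * W₁ ⟨t, htI⟩) / W₁ ⟨t, htI⟩ := by
        ring
      rw [e]
      calc |γ t (t * W₂ ⟨t, htI⟩) / W₂ ⟨t, htI⟩ - γ t (t * W₁ ⟨t, htI⟩) / W₁ ⟨t, htI⟩|
          ≤ k' * |W₂ ⟨t, htI⟩ - W₁ ⟨t, htI⟩| := hglip t htI _ (hW₂ _) _ (hW₁ _)
        _ ≤ k' * C := by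
            apply mul_le_mul_of_nonneg_left _ hk'0
            rw [abs_sub_comm]; exact hWd _
    rw [sub_zero, abs_of_pos hu0] at hb
    have e2 : singT γ σ lp ε hε0.le W₁ u - singT γ σ lp ε hε0.le W₂ u
        = (singPhi γ σ lp ε hε0.le W₁ u - singPhi γ σ lp ε hε0.le W₂ u) / u := by
      unfold singT; field_simp; ring
    rw [e2, abs_div, abs_of_pos hu0, div_le_iff₀ hu0]
    calc |singPhi γ σ lp ε hε0.le W₁ u - singPhi γ σ lp ε hε0.le W₂ u|
        ≤ (k' * C) * u := hb

lemma sing_exists (δ : ℝ) (γ : ℝ → ℝ → ℝ) (σ lp lm r k' ε : ℝ)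
    (hγc : ContinuousOn (fun p : ℝ × ℝ => γ p.1 p.2) (Set.Icc 0 δ ×ˢ Set.Icc 0 δ))
    (hlm0 : 0 < lm) (hlmlp : lm < lp) (hsum : lp + lm = σ) (hprod : lp * lm = γ 0 0)
    (hr0 : 0 < r) (hrlp : r < lp) (hk'0 : 0 ≤ k') (hk'1 : k' < 1)
    (hε0 : 0 < ε) (hεδ : ε ≤ δ) (hεΛδ : ε*(lp+r) ≤ δ)
    (hglip : ∀ t ∈ Set.Icc (0:ℝ) ε, ∀ w₁ ∈ Set.Icc (lp-r) (lp+r), ∀ w₂ ∈ Set.Icc (lp-r) (lp+r),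
      |γ t (t*w₁)/w₁ - γ t (t*w₂)/w₂| ≤ k' * |w₁ - w₂|)
    (hsmall : ∀ t ∈ Set.Icc (0:ℝ) ε, ∀ w ∈ Set.Icc (lp-r) (lp+r),
      |σ - lp - γ t (t*w)/w| ≤ r) :
    ∃ V : ℝ → ℝ, IsSingSol δ γ σ ε V ∧
      Tendsto (fun u => V u / u) (nhdsWithin 0 (Set.Ioi 0)) (nhds lp) := by
  have hlp0 : 0 < lp := hlm0.trans hlmlp
  have hA0 : 0 < lp - r := by linarith
  have hσlp : σ - lp = γ 0 0 / lp := by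
    have h1 : σ - lp = lm := by linarith
    rw [h1, ← hprod, mul_comm, mul_div_assoc, div_self hlp0.ne', mul_one]
  have h0I : (0:ℝ) ∈ Set.Icc (0:ℝ) ε := ⟨le_rfl, hε0.le⟩
  set X : Set C(Set.Icc (0:ℝ) ε, ℝ) :=
    {W | (∀ t, W t ∈ Set.Icc (lp-r) (lp+r)) ∧ W ⟨0, h0I⟩ = lp} with hX
  have hXc : IsClosed X := by
    have hXeq : X = (⋂ t, (fun W : C(Set.Icc (0:ℝ) ε, ℝ) => W t) ⁻¹' (Set.Icc (lp-r) (lp+r)))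
        ∩ ((fun W : C(Set.Icc (0:ℝ) ε, ℝ) => W ⟨0, h0I⟩) ⁻¹' {lp}) := by
      ext W
      simp only [hX, Set.mem_setOf_eq, Set.mem_inter_iff, Set.mem_iInter, Set.mem_preimage,
        Set.mem_singleton_iff]
    rw [hXeq]
    exact (isClosed_iInter fun t =>
        (isClosed_Icc).preimage (continuous_eval_const t)).inter
      ((isClosed_singleton).preimage (continuous_eval_const _))
  haveI : CompleteSpace ↥X := hXc.completeSpace_coe
  haveI : Nonempty ↥X :=
    ⟨⟨ContinuousMap.const _ lp, fun t => by
      rw [ContinuousMap.const_apply]; exact ⟨by linarith, by linarith⟩, rfl⟩⟩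
  have hmemX : ∀ W : ↥X, (∀ t, (W : C(Set.Icc (0:ℝ) ε, ℝ)) t ∈ Set.Icc (lp-r) (lp+r)) ∧
      (W : C(Set.Icc (0:ℝ) ε, ℝ)) ⟨0, h0I⟩ = lp := fun W => W.2
  set Tmap : ↥X → ↥X := fun W =>
    ⟨⟨fun u => singT γ σ lp ε hε0.le W.1 u,
      (singT_cont γ σ lp δ ε r hγc hε0 hεδ hεΛδ hA0 W.1 (hmemX W).1 (hmemX W).2 hσlp).comp
        continuous_subtype_val⟩,
      ⟨fun t => singT_mem γ σ lp ε r hε0 hr0 W.1 (hmemX W).1 hsmall t.2,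
        singT_zero γ σ lp ε hε0.le W.1⟩⟩ with hT
  have hcontr : ContractingWith (Real.toNNReal k') Tmap := by
    constructor
    · rw [← Real.toNNReal_one]
      exact (Real.toNNReal_lt_toNNReal_iff one_pos).2 hk'1
    · apply LipschitzWith.of_dist_le_mul
      intro W₁ W₂
      rw [Subtype.dist_eq, Real.coe_toNNReal _ hk'0]
      apply (ContinuousMap.dist_le (mul_nonneg hk'0 dist_nonneg)).2
      intro x
      rw [Real.dist_eq]
      exact singT_dist γ σ lp ε r k' (dist (W₁ : C(Set.Icc (0:ℝ) ε, ℝ)) (W₂ :C(Set.Icc (0:ℝ) ε, ℝ)))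
        hε0 dist_nonneg hk'0 W₁.1 W₂.1 (hmemX W₁).1 (hmemX W₂).1
        (fun t => by rw [← Real.dist_eq]; exact ContinuousMap.dist_apply_le_dist t)
        hglip
        (singH_cont γ σ lp δ ε r hγc hε0.le hεδ hεΛδ hA0 W₁.1 (hmemX W₁).1)
        (singH_cont γ σ lp δ ε r hγc hε0.le hεδ hεΛδ hA0 W₂.1 (hmemX W₂).1)
        x.2
  set Wf : ↥X := ContractingWith.fixedPoint Tmap hcontr with hWf
  have hfix : Tmap Wf = Wf := hcontr.fixedPoint_isFixedPt
  obtain ⟨hWmem, hW0⟩ := hmemX Wf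
  have hfixapp : ∀ u (hu : u ∈ Set.Icc (0:ℝ) ε),
      singT γ σ lp ε hε0.le Wf.1 u = (Wf : C(Set.Icc (0:ℝ) ε, ℝ)) ⟨u, hu⟩ := by
    intro u hu
    have h2 := congrArg (fun W : ↥X => (W : C(Set.Icc (0:ℝ) ε, ℝ)) ⟨u, hu⟩) hfix
    simpa [hT] using h2
  set V : ℝ → ℝ := fun u => lp * u + singPhi γ σ lp ε hε0.le Wf.1 u with hV
  have hVcont : Continuous V :=
    (continuous_const.mul continuous_id).add
      (singPhi_cont γ σ lp δ ε r hγc hε0.le hεδ hεΛδ hA0 Wf.1 hWmem)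
  have hV0 : V 0 = 0 := by
    rw [hV]; simp [singPhi_zero]
  have hVW : ∀ u, ∀ hu : u ∈ Set.Icc (0:ℝ) ε,
      V u = u * (Wf : C(Set.Icc (0:ℝ) ε, ℝ)) ⟨u, hu⟩ := by
    intro u hu
    rw [← hfixapp u hu]
    rcases eq_or_lt_of_le hu.1 with rfl | hu0
    · rw [singT_zero]
      simp [hV, singPhi_zero]
    · unfold singT
      rw [hV]
      field_simp
  refine ⟨V, ⟨hVcont.continuousOn, hV0, ?_, ?_, ?_⟩, ?_⟩
  · -- range in [0, δ]
    intro u hu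
    have huI : u ∈ Set.Icc (0:ℝ) ε := ⟨hu.1, hu.2.le⟩
    rw [hVW u huI]
    have hw := hWmem ⟨u, huI⟩
    constructor
    · exact mul_nonneg hu.1 (le_trans hA0.le hw.1)
    · calc u * (Wf : C(Set.Icc (0:ℝ) ε, ℝ)) ⟨u, huI⟩ ≤ ε * (lp + r) :=
          mul_le_mul hu.2.le hw.2 (le_trans hA0.le hw.1) hε0.le
        _ ≤ δ := hεΛδ
  · -- positivity
    intro u hu
    have huI : u ∈ Set.Icc (0:ℝ) ε := ⟨hu.1.le, hu.2.le⟩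
    rw [hVW u huI]
    exact mul_pos hu.1 (lt_of_lt_of_le hA0 (hWmem ⟨u, huI⟩).1)
  · -- the ODE
    intro u hu
    have huI : u ∈ Set.Icc (0:ℝ) ε := ⟨hu.1.le, hu.2.le⟩
    have hd : HasDerivAt V (lp * 1 + singH γ σ lp ε hε0.le Wf.1 u) u :=
      ((hasDerivAt_id u).const_mul lp).add
        (singPhi_deriv γ σ lp δ ε r hγc hε0.le hεδ hεΛδ hA0 Wf.1 hWmem u)
    have hWu := hWmem ⟨u, huI⟩
    have hWupos : 0 < (Wf : C(Set.Icc (0:ℝ) ε, ℝ)) ⟨u, huI⟩ := lt_of_lt_of_le hA0 hWu.1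
    have hval : lp * 1 + singH γ σ lp ε hε0.le Wf.1 u = σ - u / V u * γ u (V u) := by
      rw [singH_eq γ σ lp ε hε0.le Wf.1 huI, hVW u huI]
      field_simp [hu.1.ne', hWupos.ne']
      ring
    rw [hval] at hd
    exact hd
  · -- the limit of V u / u
    have hsl := singPhi_slope γ σ lp δ ε r hγc hε0 hεδ hεΛδ hA0 Wf.1 hWmem hW0 hσlp
    have hsl2 : Tendsto (fun u => singPhi γ σ lp ε hε0.le Wf.1 u / u)
        (nhdsWithin 0 (Set.Ioi 0)) (nhds 0) :=
      hsl.mono_left (nhdsWithin_mono 0 (fun x hx => ne_of_gt hx))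
    have hsl3 := hsl2.const_add lp
    rw [add_zero] at hsl3
    apply hsl3.congr'
    filter_upwards [eventually_mem_nhdsWithin] with u hu
    have hu0 : (0:ℝ) < u := hu
    rw [hV]
    field_simp

lemma sing_repr (δ : ℝ) (γ : ℝ → ℝ → ℝ) (σ lp ε₁ : ℝ) (V : ℝ → ℝ)
    (hγc : ContinuousOn (fun p : ℝ × ℝ => γ p.1 p.2) (Set.Icc 0 δ ×ˢ Set.Icc 0 δ))
    (hσlp : σ - lp = γ 0 0 / lp) (hlp0 : 0 < lp) (hδ0 : 0 < δ)
    (hε₁0 : 0 < ε₁) (hε₁δ : ε₁ ≤ δ)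
    (hS : IsSingSol δ γ σ ε₁ V)
    (hT : Tendsto (fun u => V u / u) (nhdsWithin 0 (Set.Ioi 0)) (nhds lp)) :
    ContinuousOn (fun t => if t = 0 then 0 else σ - lp - t / V t * γ t (V t))
      (Set.Ico 0 ε₁) ∧
    ∀ u ∈ Set.Ioo (0:ℝ) ε₁,
      V u - lp * u = ∫ t in (0:ℝ)..u,
        (if t = 0 then 0 else σ - lp - t / V t * γ t (V t)) := by
  obtain ⟨hVc, hV0, hVrange, hVpos, hVode⟩ := hS
  set g : ℝ → ℝ := fun t => if t = 0 then 0 else σ - lp - t / V t * γ t (V t) with hg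
  have hg0 : g 0 = 0 := by rw [hg]; simp
  have hgne : ∀ {s : ℝ}, s ≠ 0 → g s = σ - lp - s / V s * γ s (V s) := by
    intro s hs; rw [hg]; simp [hs]
  have hgc : ContinuousOn g (Set.Ico 0 ε₁) := by
    intro t ht
    rcases eq_or_lt_of_le ht.1 with rfl | ht0
    · -- continuity at 0
      have htV : Tendsto (fun s => s / V s) (nhdsWithin 0 (Set.Ioi 0)) (nhds (1/lp)) := by
        have h1 : Tendsto (fun s => (V s / s)⁻¹) (nhdsWithin 0 (Set.Ioi 0)) (nhds lp⁻¹) :=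
          hT.inv₀ hlp0.ne'
        rw [show (1:ℝ)/lp = lp⁻¹ by rw [one_div]]
        apply h1.congr'
        filter_upwards [Ioo_mem_nhdsGT_of_mem ⟨le_rfl, hε₁0⟩] with s hs
        rw [inv_div]
      have hV00 : Tendsto V (nhdsWithin 0 (Set.Ioi 0)) (nhds 0) := by
        have h2 : ContinuousWithinAt V (Set.Ico 0 ε₁) 0 := hVc 0 ⟨le_rfl, hε₁0⟩
        have h3 : Tendsto V (𝓝[Set.Ico 0 ε₁] 0) (nhds 0) := by
          have := h2.tendsto
          rwa [hV0] at this
        have h4 : Tendsto V (𝓝[Set.Ioo 0 ε₁] 0) (nhds 0) :=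
          h3.mono_left (nhdsWithin_mono 0 Set.Ioo_subset_Ico_self)
        rwa [nhdsWithin_Ioo_eq_nhdsGT hε₁0] at h4
      have hpair : Tendsto (fun s => ((s : ℝ), V s)) (nhdsWithin 0 (Set.Ioi 0))
          (𝓝[Set.Icc 0 δ ×ˢ Set.Icc 0 δ] ((0:ℝ), (0:ℝ))) := by
        rw [tendsto_nhdsWithin_iff]
        constructor
        · exact (tendsto_id.mono_left nhdsWithin_le_nhds).prodMk_nhds hV00
        · filter_upwards [Ioo_mem_nhdsGT_of_mem ⟨le_rfl, hε₁0⟩] with s hs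
          have hs' : s ∈ Set.Ico 0 ε₁ := ⟨hs.1.le, hs.2⟩
          exact ⟨⟨hs.1.le, hs.2.le.trans hε₁δ⟩, hVrange s hs'⟩
      have htγ : Tendsto (fun s => γ s (V s)) (nhdsWithin 0 (Set.Ioi 0)) (nhds (γ 0 0)) :=
        (hγc ((0:ℝ),(0:ℝ)) ⟨⟨le_rfl, hδ0.le⟩, ⟨le_rfl, hδ0.le⟩⟩).tendsto.comp hpair
      have hglim : Tendsto g (nhdsWithin 0 (Set.Ioi 0)) (nhds 0) := by
        have h5 : Tendsto (fun s => σ - lp - s / V s * γ s (V s))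
            (nhdsWithin 0 (Set.Ioi 0)) (nhds (σ - lp - 1/lp * γ 0 0)) :=
          tendsto_const_nhds.sub (htV.mul htγ)
        have h6 : σ - lp - 1/lp * γ 0 0 = 0 := by
          rw [hσlp]; ring
        rw [h6] at h5
        apply h5.congr'
        filter_upwards [Ioo_mem_nhdsGT_of_mem ⟨le_rfl, hε₁0⟩] with s hs
        rw [hgne hs.1.ne']
      -- assemble ContinuousWithinAt at 0
      have hsplit : Set.Ico (0:ℝ) ε₁ = {0} ∪ Set.Ioo 0 ε₁ := by
        ext x
        simp only [Set.mem_Ico, Set.mem_union, Set.mem_singleton_iff, Set.mem_Ioo]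
        constructor
        · rintro ⟨hx1, hx2⟩
          rcases eq_or_lt_of_le hx1 with rfl | h
          · exact Or.inl rfl
          · exact Or.inr ⟨h, hx2⟩
        · rintro (rfl | ⟨h1, h2⟩)
          · exact ⟨le_rfl, hε₁0⟩
          · exact ⟨h1.le, h2⟩
      unfold ContinuousWithinAt
      rw [hg0, hsplit, nhdsWithin_union, tendsto_sup, nhdsWithin_singleton]
      constructor
      · have := tendsto_pure_nhds g 0
        rwa [hg0] at this
      · exact hglim.mono_left
          (nhdsWithin_mono 0 (Set.Ioo_subset_Ioi_self : Set.Ioo (0:ℝ) ε₁ ⊆ _))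
    · -- continuity at t > 0
      have htε : t < ε₁ := ht.2
      have hVt : 0 < V t := hVpos t ⟨ht0, htε⟩
      have hγcw : ContinuousWithinAt (fun s => γ s (V s)) (Set.Ico 0 ε₁) t := by
        have := ContinuousWithinAt.comp (f := fun s => ((s:ℝ), V s))
          (hγc (t, V t) ⟨⟨ht.1, htε.le.trans hε₁δ⟩, hVrange t ht⟩)
          ((continuousWithinAt_id).prodMk (hVc t ht))
          (fun s hs => ⟨⟨hs.1, hs.2.le.trans hε₁δ⟩, hVrange s hs⟩)
        exact this
      have hf₀ : ContinuousWithinAt (fun s => σ - lp - s / V s * γ s (V s))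
          (Set.Ico 0 ε₁) t :=
        continuousWithinAt_const.sub ((continuousWithinAt_id.div (hVc t ht) hVt.ne').mul hγcw)
      apply hf₀.congr_of_eventuallyEq _ (hgne ht0.ne')
      filter_upwards [mem_nhdsWithin_of_mem_nhds
        (isOpen_compl_singleton.mem_nhds (by simpa using ht0.ne' : t ∈ ({0}ᶜ : Set ℝ)))] with s hs
      exact hgne hs
  refine ⟨hgc, ?_⟩
  intro u hu
  have hsub : Set.Icc (0:ℝ) u ⊆ Set.Ico 0 ε₁ := fun x hx => ⟨hx.1, lt_of_le_of_lt hx.2 hu.2⟩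
  have hint : IntervalIntegrable g MeasureTheory.volume 0 u := by
    apply ContinuousOn.intervalIntegrable
    rw [uIcc_of_le hu.1.le]
    exact hgc.mono hsub
  have hcont : ContinuousOn (fun t => V t - lp*t) (Set.Icc 0 u) :=
    (hVc.mono hsub).sub ((continuous_const.mul continuous_id).continuousOn)
  have hderiv : ∀ x ∈ Set.Ioo (0:ℝ) u,
      HasDerivWithinAt (fun t => V t - lp*t) (g x) (Set.Ioi x) x := by
    intro x hx
    have hdd := (hVode x ⟨hx.1, hx.2.trans hu.2⟩).sub ((hasDerivAt_id x).const_mul lp)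
    have hgx : g x = σ - x / V x * γ x (V x) - lp * 1 := by
      rw [hgne hx.1.ne']; ring
    rw [hgx]
    exact hdd.hasDerivWithinAt
  have hftc := intervalIntegral.integral_eq_sub_of_hasDeriv_right_of_le hu.1.le hcont hderiv hint
  rw [hftc, hV0]
  ring

lemma sing_unique (δ : ℝ) (γ : ℝ → ℝ → ℝ) (σ lp lm r k' ε ε₁ ε₂ : ℝ) (V₁ V₂ : ℝ → ℝ)
    (hγc : ContinuousOn (fun p : ℝ × ℝ => γ p.1 p.2) (Set.Icc 0 δ ×ˢ Set.Icc 0 δ))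
    (hδ0 : 0 < δ)
    (hlm0 : 0 < lm) (hlmlp : lm < lp) (hsum : lp + lm = σ) (hprod : lp * lm = γ 0 0)
    (hr0 : 0 < r) (hrlp : r < lp) (hk'0 : 0 ≤ k') (hk'1 : k' < 1)
    (hε0 : 0 < ε) (hεδ : ε ≤ δ)
    (hglip : ∀ t ∈ Set.Icc (0:ℝ) ε, ∀ w₁ ∈ Set.Icc (lp-r) (lp+r), ∀ w₂ ∈ Set.Icc (lp-r) (lp+r),
      |γ t (t*w₁)/w₁ - γ t (t*w₂)/w₂| ≤ k' * |w₁ - w₂|)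
    (hε₁0 : 0 < ε₁) (hε₁δ : ε₁ ≤ δ) (hε₂0 : 0 < ε₂) (hε₂δ : ε₂ ≤ δ)
    (hS₁ : IsSingSol δ γ σ ε₁ V₁)
    (hT₁ : Tendsto (fun u => V₁ u / u) (nhdsWithin 0 (Set.Ioi 0)) (nhds lp))
    (hS₂ : IsSingSol δ γ σ ε₂ V₂)
    (hT₂ : Tendsto (fun u => V₂ u / u) (nhdsWithin 0 (Set.Ioi 0)) (nhds lp)) :
    ∃ ε3 : ℝ, 0 < ε3 ∧ ∀ u ∈ Set.Ico (0:ℝ) ε3, V₁ u = V₂ u := by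
  have hlp0 : 0 < lp := hlm0.trans hlmlp
  have hA0 : 0 < lp - r := by linarith
  have hσlp : σ - lp = γ 0 0 / lp := by
    have h1 : σ - lp = lm := by linarith
    rw [h1, ← hprod, mul_comm, mul_div_assoc, div_self hlp0.ne', mul_one]
  obtain ⟨hg₁c, hrepr₁⟩ := sing_repr δ γ σ lp ε₁ V₁ hγc hσlp hlp0 hδ0 hε₁0 hε₁δ hS₁ hT₁
  obtain ⟨hg₂c, hrepr₂⟩ := sing_repr δ γ σ lp ε₂ V₂ hγc hσlp hlp0 hδ0 hε₂0 hε₂δ hS₂ hT₂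
  obtain ⟨hV₁c, hV₁0, hV₁range, hV₁pos, _⟩ := hS₁
  obtain ⟨hV₂c, hV₂0, hV₂range, hV₂pos, _⟩ := hS₂
  have hball : Metric.closedBall lp r ∈ nhds lp := Metric.closedBall_mem_nhds lp hr0
  obtain ⟨b₁, hb₁pos, hb₁⟩ := mem_nhdsGT_iff_exists_Ioc_subset.1 (hT₁ hball)
  obtain ⟨b₂, hb₂pos, hb₂⟩ := mem_nhdsGT_iff_exists_Ioc_subset.1 (hT₂ hball)
  set ε₃ := min (min b₁ b₂) (min ε (min ε₁ ε₂ / 2)) with hε₃def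
  have hε₃0 : 0 < ε₃ := lt_min (lt_min hb₁pos hb₂pos)
    (lt_min hε0 (by positivity))
  have hε₃b₁ : ε₃ ≤ b₁ := le_trans (min_le_left _ _) (min_le_left _ _)
  have hε₃b₂ : ε₃ ≤ b₂ := le_trans (min_le_left _ _) (min_le_right _ _)
  have hε₃ε : ε₃ ≤ ε := le_trans (min_le_right _ _) (min_le_left _ _)
  have hε₃half : ε₃ ≤ min ε₁ ε₂ / 2 := le_trans (min_le_right _ _) (min_le_right _ _)
  have hε₃ε₁ : ε₃ < ε₁ := by
    have h1 : min ε₁ ε₂ / 2 < min ε₁ ε₂ := half_lt_self (lt_min hε₁0 hε₂0)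
    have := lt_of_le_of_lt hε₃half h1
    exact lt_of_lt_of_le this (min_le_left _ _)
  have hε₃ε₂ : ε₃ < ε₂ := by
    have h1 : min ε₁ ε₂ / 2 < min ε₁ ε₂ := half_lt_self (lt_min hε₁0 hε₂0)
    have := lt_of_le_of_lt hε₃half h1
    exact lt_of_lt_of_le this (min_le_right _ _)
  have hw₁ : ∀ t ∈ Set.Ioc (0:ℝ) ε₃, |V₁ t / t - lp| ≤ r := by
    intro t ht
    have := hb₁ ⟨ht.1, ht.2.trans hε₃b₁⟩
    rw [Set.mem_preimage, Metric.mem_closedBall, Real.dist_eq] at this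
    exact this
  have hw₂ : ∀ t ∈ Set.Ioc (0:ℝ) ε₃, |V₂ t / t - lp| ≤ r := by
    intro t ht
    have := hb₂ ⟨ht.1, ht.2.trans hε₃b₂⟩
    rw [Set.mem_preimage, Metric.mem_closedBall, Real.dist_eq] at this
    exact this
  -- rewrite gᵢ in the glip form
  have hgform : ∀ (V : ℝ → ℝ) (t : ℝ), 0 < t → 0 < V t →
      σ - lp - t / V t * γ t (V t) = σ - lp - γ t (t*(V t / t))/(V t / t) := by
    intro V t ht0 hVt
    have htw : t * (V t / t) = V t := by
      rw [mul_comm, div_mul_cancel₀ _ ht0.ne']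
    rw [htw]
    congr 1
    rw [div_div_eq_mul_div]
    ring
  have key : ∀ n : ℕ, ∀ u ∈ Set.Ioc (0:ℝ) ε₃, |V₁ u - V₂ u| ≤ 2*r*k'^n*u := by
    intro n
    induction n with
    | zero =>
      intro u hu
      have hVlp : ∀ (V : ℝ → ℝ), |V u / u - lp| ≤ r → |V u - lp*u| ≤ r*u := by
        intro V h
        have he : V u - lp*u = (V u / u - lp)*u := by
          rw [sub_mul, div_mul_cancel₀ _ hu.1.ne']
        rw [he, abs_mul, abs_of_pos hu.1]
        exact mul_le_mul_of_nonneg_right h hu.1.le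
      have h1 := hVlp V₁ (hw₁ u hu)
      have h2 := hVlp V₂ (hw₂ u hu)
      have : |V₁ u - V₂ u| ≤ |V₁ u - lp*u| + |lp*u - V₂ u| := by
        calc |V₁ u - V₂ u| = |(V₁ u - lp*u) + (lp*u - V₂ u)| := by congr 1; ring
          _ ≤ _ := abs_add_le _ _
      rw [abs_sub_comm (lp*u) (V₂ u)] at this
      calc |V₁ u - V₂ u| ≤ r*u + r*u := by linarith
        _ = 2*r*k'^0*u := by ring
    | succ n ih =>
      intro u hu
      have hu₁ : u ∈ Set.Ioo (0:ℝ) ε₁ := ⟨hu.1, lt_of_le_of_lt hu.2 hε₃ε₁⟩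
      have hu₂ : u ∈ Set.Ioo (0:ℝ) ε₂ := ⟨hu.1, lt_of_le_of_lt hu.2 hε₃ε₂⟩
      have hint₁ : IntervalIntegrable
          (fun t => if t = 0 then 0 else σ - lp - t / V₁ t * γ t (V₁ t))
          MeasureTheory.volume 0 u := by
        apply ContinuousOn.intervalIntegrable
        rw [uIcc_of_le hu.1.le]
        exact hg₁c.mono (fun x hx => ⟨hx.1, lt_of_le_of_lt hx.2 hu₁.2⟩)
      have hint₂ : IntervalIntegrable
          (fun t => if t = 0 then 0 else σ - lp - t / V₂ t * γ t (V₂ t))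
          MeasureTheory.volume 0 u := by
        apply ContinuousOn.intervalIntegrable
        rw [uIcc_of_le hu.1.le]
        exact hg₂c.mono (fun x hx => ⟨hx.1, lt_of_le_of_lt hx.2 hu₂.2⟩)
      have hdiff : V₁ u - V₂ u = ∫ t in (0:ℝ)..u,
          ((if t = 0 then 0 else σ - lp - t / V₁ t * γ t (V₁ t))
            - (if t = 0 then 0 else σ - lp - t / V₂ t * γ t (V₂ t))) := by
        rw [intervalIntegral.integral_sub hint₁ hint₂, ← hrepr₁ u hu₁, ← hrepr₂ u hu₂]
        ring
      have hbd : |V₁ u - V₂ u| ≤ (k' * (2*r*k'^n)) * |u - 0| := by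
        rw [hdiff, ← Real.norm_eq_abs]
        apply intervalIntegral.norm_integral_le_of_norm_le_const
        intro t ht
        rw [uIoc_of_le hu.1.le] at ht
        have ht₃ : t ∈ Set.Ioc (0:ℝ) ε₃ := ⟨ht.1, ht.2.trans hu.2⟩
        have ht0 : 0 < t := ht.1
        have hV₁t : 0 < V₁ t := hV₁pos t ⟨ht0, lt_of_le_of_lt ht₃.2 hε₃ε₁⟩
        have hV₂t : 0 < V₂ t := hV₂pos t ⟨ht0, lt_of_le_of_lt ht₃.2 hε₃ε₂⟩
        have hw₁m : V₁ t / t ∈ Set.Icc (lp-r) (lp+r) := by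
          have := abs_le.1 (hw₁ t ht₃)
          exact ⟨by linarith [this.1], by linarith [this.2]⟩
        have hw₂m : V₂ t / t ∈ Set.Icc (lp-r) (lp+r) := by
          have := abs_le.1 (hw₂ t ht₃)
          exact ⟨by linarith [this.1], by linarith [this.2]⟩
        rw [Real.norm_eq_abs, if_neg ht0.ne', if_neg ht0.ne',
          hgform V₁ t ht0 hV₁t, hgform V₂ t ht0 hV₂t]
        have he : (σ - lp - γ t (t*(V₁ t / t))/(V₁ t / t))
            - (σ - lp - γ t (t*(V₂ t / t))/(V₂ t / t))
            = γ t (t*(V₂ t / t))/(V₂ t / t) - γ t (t*(V₁ t / t))/(V₁ t / t) := by ring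
        rw [he]
        have hlip2 := hglip t ⟨ht0.le, ht₃.2.trans hε₃ε⟩ _ hw₂m _ hw₁m
        have hwd : |V₂ t / t - V₁ t / t| ≤ 2*r*k'^n := by
          rw [div_sub_div_same, abs_div, abs_of_pos ht0, div_le_iff₀ ht0]
          rw [abs_sub_comm]
          exact ih t ht₃
        calc |γ t (t*(V₂ t / t))/(V₂ t / t) - γ t (t*(V₁ t / t))/(V₁ t / t)|
            ≤ k' * |V₂ t / t - V₁ t / t| := hlip2
          _ ≤ k' * (2*r*k'^n) := mul_le_mul_of_nonneg_left hwd hk'0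
      rw [sub_zero, abs_of_pos hu.1] at hbd
      calc |V₁ u - V₂ u| ≤ (k' * (2*r*k'^n)) * u := hbd
        _ = 2*r*k'^(n+1)*u := by ring
  refine ⟨ε₃, hε₃0, ?_⟩
  intro u hu
  rcases eq_or_lt_of_le hu.1 with rfl | hu0
  · rw [hV₁0, hV₂0]
  · have huI : u ∈ Set.Ioc (0:ℝ) ε₃ := ⟨hu0, hu.2.le⟩
    have hlim : Tendsto (fun n : ℕ => 2*r*k'^n*u) atTop (nhds 0) := by
      have h1 := tendsto_pow_atTop_nhds_zero_of_lt_one hk'0 hk'1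
      have h2 := (h1.const_mul (2*r)).mul_const u
      simpa using h2
    have hle : |V₁ u - V₂ u| ≤ 0 :=
      ge_of_tendsto hlim (Filter.Eventually.of_forall (fun n => key n u huI))
    have := abs_nonpos_iff.1 hle
    linarith [sub_eq_zero.1 this, (sub_eq_zero.1 this).le]

theorem stmt18 (δ : ℝ) (hδ : 0 < δ) (γ : ℝ → ℝ → ℝ)
    (hγc : ContinuousOn (fun p : ℝ × ℝ => γ p.1 p.2) (Set.Icc 0 δ ×ˢ Set.Icc 0 δ))
    (hγpos : ∀ u ∈ Set.Icc (0:ℝ) δ, ∀ v ∈ Set.Icc (0:ℝ) δ, 0 < γ u v)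
    (L : ℝ) (hL : 0 < L)
    (hlip : ∀ u ∈ Set.Icc (0:ℝ) δ, ∀ V₁ ∈ Set.Icc (0:ℝ) δ, ∀ V₂ ∈ Set.Icc (0:ℝ) δ,
      |γ u V₂ - γ u V₁| ≤ L * |V₂ - V₁|)
    (σ : ℝ) (hσ : 2 * Real.sqrt (γ 0 0) < σ) :
    (∃ ε : ℝ, 0 < ε ∧ ε ≤ δ ∧ ∃ V : ℝ → ℝ, IsSingSol δ γ σ ε V ∧
      Filter.Tendsto (fun u => V u / u) (nhdsWithin 0 (Set.Ioi 0))
        (nhds ((σ + Real.sqrt (σ ^ 2 - 4 * γ 0 0)) / 2))) ∧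
    (∀ ε₁ ε₂ : ℝ, 0 < ε₁ → ε₁ ≤ δ → 0 < ε₂ → ε₂ ≤ δ → ∀ V₁ V₂ : ℝ → ℝ,
      IsSingSol δ γ σ ε₁ V₁ →
      Filter.Tendsto (fun u => V₁ u / u) (nhdsWithin 0 (Set.Ioi 0))
        (nhds ((σ + Real.sqrt (σ ^ 2 - 4 * γ 0 0)) / 2)) →
      IsSingSol δ γ σ ε₂ V₂ →
      Filter.Tendsto (fun u => V₂ u / u) (nhdsWithin 0 (Set.Ioi 0))
        (nhds ((σ + Real.sqrt (σ ^ 2 - 4 * γ 0 0)) / 2)) →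
      ∃ ε3 : ℝ, 0 < ε3 ∧ ∀ u ∈ Set.Ico (0:ℝ) ε3, V₁ u = V₂ u) := by
  obtain ⟨lp, lm, r, k', η, ε, hlm0, hlmlp, hsum, hprod, hlpeq, hr0, hrlp, hk'0, hk'1,
    hη0, hε0, hεδ, hεΛδ, hk, hη2, hγnear⟩ := sing_params δ hδ γ hγc hγpos L hL σ hσ
  have hγ00 : 0 ≤ γ 0 0 := (hγpos 0 ⟨le_rfl, hδ.le⟩ 0 ⟨le_rfl, hδ.le⟩).le
  have hglip := sing_glip γ δ L lp r k' η ε hγ00 hlip hγnear hη0.le hr0 hrlp hL hε0 hεδ hεΛδ hk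
  have hlp0 : 0 < lp := hlm0.trans hlmlp
  have hσlp : σ - lp = γ 0 0 / lp := by
    have h1 : σ - lp = lm := by linarith
    rw [h1, ← hprod, mul_comm, mul_div_assoc, div_self hlp0.ne', mul_one]
  have hsmall := sing_gsmall γ δ L lp r k' η ε σ hγ00 hlip hγnear hη0.le hr0 hrlp hL
    hε0 hεδ hεΛδ hk hσlp hη2 hk'0 hk'1.le
  have hlpeq' : lp = (σ + Real.sqrt (σ ^ 2 - 4 * γ 0 0)) / 2 := hlpeq
  constructor
  · obtain ⟨V, hV, hVt⟩ := sing_exists δ γ σ lp lm r k' ε hγc hlm0 hlmlp hsum hprod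
      hr0 hrlp hk'0 hk'1 hε0 hεδ hεΛδ hglip hsmall
    refine ⟨ε, hε0, hεδ, V, hV, ?_⟩
    rw [← hlpeq']
    exact hVt
  · intro ε₁ ε₂ hε₁0 hε₁δ hε₂0 hε₂δ V₁ V₂ hS₁ hT₁ hS₂ hT₂
    rw [← hlpeq'] at hT₁ hT₂
    exact sing_unique δ γ σ lp lm r k' ε ε₁ ε₂ V₁ V₂ hγc hδ hlm0 hlmlp hsum hprod
      hr0 hrlp hk'0 hk'1 hε0 hεδ hglip hε₁0 hε₁δ hε₂0 hε₂δ hS₁ hT₁ hS₂ hT₂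
end
end
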